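/- arXiv:2001.08478 — 2 statements merged into one kernel-verified Lean document; each statement's English description precedes it below -/
import Mathlib

section
/- Acyclicity on terms: let (Σ, <) be a well-founded partial order. For no star-free term t over Σ do we have t (▷+ · ≃) t; that is, there is no star-free term t and term u with t ▷+ u and u ≃ t (the intermediate terms of the ▷ reduction may contain marked symbols). -/
namespace StarGames

/-- Unranked terms over signature `σ` and variables `X`. -/
inductive Term (σ : Type) (X : Type) : Type
  | var : X → Term σ X
  | app : σ → List (Term σ X) → Term σ X

variable {σ σ' X : Type}

/-- Relabeling of symbols. -/
def Term.relabel (h : σ → σ') : Term σ X → Term σ' X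
  | .var x => .var x
  | .app f ts => .app (h f) (ts.attach.map fun ⟨t, _⟩ => t.relabel h)
decreasing_by
  have := List.sizeOf_lt_of_mem ‹_ ∈ ts›
  simp only [Term.app.sizeOf_spec]
  omega

/-- Closure of a root-step relation under contexts (rewriting inside one argument). -/
inductive Rewrite (R : Term σ X → Term σ X → Prop) : Term σ X → Term σ X → Prop
  | root {s t : Term σ X} : R s t → Rewrite R s t
  | congr {s t : Term σ X} (f : σ) (pre post : List (Term σ X)) :
      Rewrite R s t →
      Rewrite R (Term.app f (pre ++ s :: post)) (Term.app f (pre ++ t :: post))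

/-- Root steps of the swap TRS:  f(u⃗,x,y,w⃗) → f(u⃗,y,x,w⃗). -/
inductive SwapRoot : Term σ X → Term σ X → Prop
  | swap (f : σ) (us : List (Term σ X)) (x y : Term σ X) (ws : List (Term σ X)) :
      SwapRoot (Term.app f (us ++ x :: y :: ws)) (Term.app f (us ++ y :: x :: ws))

/-- One swap step, anywhere in a term. -/
def SwapStep : Term σ X → Term σ X → Prop := Rewrite (SwapRoot (σ := σ) (X := X))

/-- `≃` : the equivalence relation generated by swap steps. -/
def TermEquiv : Term σ X → Term σ X → Prop := Relation.EqvGen SwapStep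

def treeSetoid (σ X : Type) : Setoid (Term σ X) :=
  ⟨TermEquiv, Relation.EqvGen.is_equivalence _⟩

/-- (Unordered) trees: terms modulo permutation of arguments. -/
def Tree (σ X : Type) := Quotient (treeSetoid σ X)

def Tree.mk (t : Term σ X) : Tree σ X := Quotient.mk (treeSetoid σ X) t

/-- Rewrite relation induced on trees by a root-step relation. -/
def TreeRel (R : Term σ X → Term σ X → Prop) : Tree σ X → Tree σ X → Prop :=
  fun a b => ∃ s t : Term σ X, a = Tree.mk s ∧ b = Tree.mk t ∧ Rewrite R s t

/-- Terms all of whose symbols satisfy `p`. -/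
inductive Uses (p : σ → Prop) : Term σ X → Prop
  | var (x : X) : Uses p (Term.var x)
  | app (f : σ) (ts : List (Term σ X)) :
      p f → (∀ t ∈ ts, Uses p t) → Uses p (Term.app f ts)

end StarGames
namespace StarGames

variable {σ X : Type}

/-- Root steps of the TRS `Star` over `Σ ∪ Σ⋆`.
`Sum.inl f` is the plain symbol `f`, `Sum.inr f` is the marked symbol `f⋆`.
`lt a b` means `a < b` in the precedence. -/
inductive StarRoot (lt : σ → σ → Prop) : Term (σ ⊕ σ) X → Term (σ ⊕ σ) X → Prop
  | put (f : σ) (ts : List (Term (σ ⊕ σ) X)) :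
      StarRoot lt (.app (.inl f) ts) (.app (.inr f) ts)
  | select (f : σ) (xs : List (Term (σ ⊕ σ) X)) (y : Term (σ ⊕ σ) X)
      (zs : List (Term (σ ⊕ σ) X)) :
      StarRoot lt (.app (.inr f) (xs ++ y :: zs)) y
  | copy (f g : σ) (k : ℕ) (ts : List (Term (σ ⊕ σ) X)) :
      lt g f →
      StarRoot lt (.app (.inr f) ts)
        (.app (.inl g) (List.replicate k (Term.app (.inr f) ts)))
  | down (f g : σ) (k : ℕ) (xs ys zs : List (Term (σ ⊕ σ) X)) :
      StarRoot lt (.app (.inr f) (xs ++ Term.app (.inl g) ys :: zs))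
        (.app (.inl f) (xs ++ List.replicate k (Term.app (.inr g) ys) ++ zs))

/-- `▷` on terms over `Σ ∪ Σ⋆`. -/
def StarStep (lt : σ → σ → Prop) : Term (σ ⊕ σ) X → Term (σ ⊕ σ) X → Prop :=
  Rewrite (StarRoot lt)

/-- `▷` on trees over `Σ ∪ Σ⋆`. -/
def StarTree (lt : σ → σ → Prop) : Tree (σ ⊕ σ) X → Tree (σ ⊕ σ) X → Prop :=
  TreeRel (StarRoot lt)

/-- A symbol of `Σ ∪ Σ⋆` is unmarked if it belongs to `Σ`. -/
def Unstarred : σ ⊕ σ → Prop := fun s => ∃ f : σ, s = Sum.inl f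

/-- A term is star-free if it contains no marked symbol. -/
def StarFreeTerm : Term (σ ⊕ σ) X → Prop := Uses Unstarred

/-- A tree is star-free if it contains no marked symbol. -/
def StarFreeTree (T : Tree (σ ⊕ σ) X) : Prop :=
  ∃ t : Term (σ ⊕ σ) X, T = Tree.mk t ∧ StarFreeTerm t

end StarGames

namespace StarGames

variable {σ X : Type}

/-- Size of a term. -/
def tsize : Term σ X → ℕ
  | .var _ => 1
  | .app _ ts => 1 + (ts.attach.map fun ⟨t, _⟩ => tsize t).sum
decreasing_by
  have := List.sizeOf_lt_of_mem ‹_ ∈ ts›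
  simp only [Term.app.sizeOf_spec]
  omega

lemma tsize_app (f : σ) (ts : List (Term σ X)) :
    tsize (Term.app f ts) = 1 + (ts.map tsize).sum := by
  rw [tsize]
  congr 1
  exact congrArg List.sum (List.attach_map_val (l := ts) (f := tsize))

lemma tsize_lt_of_mem {f : σ} {ts : List (Term σ X)} {t : Term σ X} (ht : t ∈ ts) :
    tsize t < tsize (Term.app f ts) := by
  rw [tsize_app]
  have : tsize t ≤ (ts.map tsize).sum :=
    List.single_le_sum (fun _ _ => Nat.zero_le _) _ (List.mem_map_of_mem (f := tsize) ht)
  omega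

lemma swapStep_mk {s t : Term σ X} (h : SwapStep s t) : Tree.mk s = Tree.mk t :=
  Quotient.sound (Relation.EqvGen.rel _ _ h)

/-- Top-level destructor: root symbol together with the multiset of argument trees. -/
def dest : Term σ X → (σ × Multiset (Tree σ X)) ⊕ X
  | .var x => .inr x
  | .app f ts => .inl (f, (ts.map Tree.mk : Multiset (Tree σ X)))

lemma swapStep_dest {s t : Term σ X} (h : SwapStep s t) : dest s = dest t := by
  induction h with
  | root hr =>
    cases hr with
    | swap f us x y ws =>
      simp only [dest, Sum.inl.injEq, Prod.mk.injEq, true_and]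
      rw [Multiset.coe_eq_coe]
      exact ((List.Perm.append_left us (List.Perm.swap y x ws)).map Tree.mk)
  | @congr a b f pre post hrw _ =>
    have hq : Tree.mk a = Tree.mk b := swapStep_mk hrw
    simp only [dest, Sum.inl.injEq, Prod.mk.injEq, true_and]
    simp [hq]

lemma termEquiv_dest {s t : Term σ X} (h : TermEquiv s t) : dest s = dest t := by
  induction h with
  | rel _ _ h => exact swapStep_dest h
  | refl => rfl
  | symm _ _ _ ih => exact ih.symm
  | trans _ _ _ _ _ ih1 ih2 => exact ih1.trans ih2

lemma mk_eq_dest {s t : Term σ X} (h : Tree.mk s = Tree.mk t) : dest s = dest t :=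
  termEquiv_dest (Quotient.exact h)

end StarGames
namespace StarGames

variable {σ X : Type}

lemma qapp_eq {f g : σ} {ss ts : List (Term σ X)}
    (h : Tree.mk (Term.app f ss) = Tree.mk (Term.app g ts)) :
    f = g ∧ (↑ss : Multiset (Term σ X)).map Tree.mk = (↑ts : Multiset (Term σ X)).map Tree.mk := by
  have := mk_eq_dest h
  simp only [dest, Sum.inl.injEq, Prod.mk.injEq] at this
  refine ⟨this.1, ?_⟩
  rw [Multiset.map_coe, Multiset.map_coe]
  exact_mod_cast this.2

lemma qvar_ne {x : X} {f : σ} {ts : List (Term σ X)} :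
    Tree.mk (Term.var x) ≠ Tree.mk (Term.app f ts) := by
  intro h
  have := mk_eq_dest h
  simp [dest] at this

lemma swapStep_tsize {s t : Term σ X} (h : SwapStep s t) : tsize s = tsize t := by
  induction h with
  | root hr =>
    cases hr with
    | swap f us x y ws => simp [tsize_app, List.map_append]; omega
  | @congr a b f pre post _ ih =>
    simp [tsize_app, List.map_append, ih]

lemma mk_eq_tsize {s t : Term σ X} (h : Tree.mk s = Tree.mk t) : tsize s = tsize t := by
  have h' : TermEquiv s t := Quotient.exact h
  clear h
  induction h' with
  | rel _ _ hst => exact swapStep_tsize hst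
  | refl => rfl
  | symm _ _ _ ih => exact ih.symm
  | trans _ _ _ _ _ ih1 ih2 => exact ih1.trans ih2

lemma starFree_arg {f : σ ⊕ σ} {ws : List (Term (σ ⊕ σ) X)} (h : StarFreeTerm (Term.app f ws))
    {w : Term (σ ⊕ σ) X} (hw : w ∈ ws) : StarFreeTerm w := by
  cases h with | app _ _ _ hall => exact hall w hw

lemma starFree_head {s : σ ⊕ σ} {ws : List (Term (σ ⊕ σ) X)}
    (h : StarFreeTerm (Term.app s ws)) : ∃ f : σ, s = Sum.inl f := by
  cases h with | app _ _ hp _ => exact hp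

lemma starFree_not_mk_inr {w : Term (σ ⊕ σ) X} (hw : StarFreeTerm w) {g : σ}
    {ts : List (Term (σ ⊕ σ) X)} : Tree.mk w ≠ Tree.mk (Term.app (Sum.inr g) ts) := by
  intro h
  cases w with
  | var x => exact qvar_ne h
  | app s ws =>
    obtain ⟨f, rfl⟩ := starFree_head hw
    exact Sum.inl_ne_inr (qapp_eq h).1

/-! ### Multiset helpers -/

lemma map_split {α β : Type*} (f : α → β) :
    ∀ (M : Multiset α) (A B : Multiset β), M.map f = A + B →
      ∃ M1 M2, M = M1 + M2 ∧ M1.map f = A ∧ M2.map f = B := by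
  intro M
  induction M using Multiset.induction with
  | empty =>
    intro A B h
    have h' : A + B = 0 := by simpa using h.symm
    obtain ⟨rfl, rfl⟩ := add_eq_zero.mp h'
    exact ⟨0, 0, by simp, by simp, by simp⟩
  | cons a M IH =>
    intro A B h
    have hmem : f a ∈ A + B := by rw [← h]; simp
    rcases Multiset.mem_add.mp hmem with hA | hB
    · obtain ⟨A', rfl⟩ := Multiset.exists_cons_of_mem hA
      have h' : M.map f = A' + B := by
        have : f a ::ₘ M.map f = f a ::ₘ (A' + B) := by simpa [Multiset.cons_add] using h
        exact (Multiset.cons_inj_right _).mp this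
      obtain ⟨M1, M2, rfl, h1, h2⟩ := IH _ _ h'
      exact ⟨a ::ₘ M1, M2, by simp [Multiset.cons_add], by simp [h1], h2⟩
    · obtain ⟨B', rfl⟩ := Multiset.exists_cons_of_mem hB
      have h' : M.map f = A + B' := by
        have : f a ::ₘ M.map f = f a ::ₘ (A + B') := by
          simpa [Multiset.cons_add, Multiset.add_cons] using h
        exact (Multiset.cons_inj_right _).mp this
      obtain ⟨M1, M2, rfl, h1, h2⟩ := IH _ _ h'
      exact ⟨M1, a ::ₘ M2, by simp [Multiset.add_cons, Multiset.cons_add], h1, by simp [h2]⟩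

lemma riesz {α : Type*} :
    ∀ (A B C D : Multiset α), A + B = C + D →
      ∃ P Q R S, A = P + Q ∧ B = R + S ∧ C = P + R ∧ D = Q + S := by
  intro A
  induction A using Multiset.induction with
  | empty =>
    intro B C D h
    exact ⟨0, 0, C, D, by simp, by simpa using h, by simp, by simp⟩
  | cons a A IH =>
    intro B C D h
    have hmem : a ∈ C + D := by rw [← h]; simp
    rcases Multiset.mem_add.mp hmem with hC | hD
    · obtain ⟨C', rfl⟩ := Multiset.exists_cons_of_mem hC
      have h' : A + B = C' + D := by
        have : a ::ₘ (A + B) = a ::ₘ (C' + D) := by simpa [Multiset.cons_add] using h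
        exact (Multiset.cons_inj_right _).mp this
      obtain ⟨P, Q, R, S, h1, h2, h3, h4⟩ := IH _ _ _ h'
      exact ⟨a ::ₘ P, Q, R, S, by simp [Multiset.cons_add, h1], h2, by simp [Multiset.cons_add, h3], h4⟩
    · obtain ⟨D', rfl⟩ := Multiset.exists_cons_of_mem hD
      have h' : A + B = C + D' := by
        have : a ::ₘ (A + B) = a ::ₘ (C + D') := by
          simpa [Multiset.cons_add, Multiset.add_cons] using h
        exact (Multiset.cons_inj_right _).mp this
      obtain ⟨P, Q, R, S, h1, h2, h3, h4⟩ := IH _ _ _ h'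
      exact ⟨P, a ::ₘ Q, R, S, by simp [Multiset.cons_add, Multiset.add_cons, h1], h2, h3,
        by simp [Multiset.cons_add, Multiset.add_cons, h4]⟩

lemma exists_max {α : Type*} (R : α → α → Prop) :
    ∀ (W : Multiset α), W ≠ 0 →
      (∀ x ∈ W, ∀ y ∈ W, ∀ z ∈ W, R x y → R y z → R x z) →
      (∀ x ∈ W, ¬ R x x) →
      ∃ m ∈ W, ∀ y ∈ W, ¬ R y m := by
  intro W
  induction W using Multiset.induction with
  | empty => intro h; exact absurd rfl h
  | cons a W IH =>
    intro _ htr hir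
    by_cases hW : W = 0
    · subst hW
      refine ⟨a, by simp, ?_⟩
      intro y hy
      rw [Multiset.mem_cons] at hy
      rcases hy with rfl | hy
      · exact hir _ (by simp)
      · simp at hy
    · obtain ⟨m, hm, hmax⟩ := IH hW
        (fun x hx y hy z hz => htr x (Multiset.mem_cons_of_mem hx) y (Multiset.mem_cons_of_mem hy)
          z (Multiset.mem_cons_of_mem hz))
        (fun x hx => hir x (Multiset.mem_cons_of_mem hx))
      by_cases hRam : R a m
      · refine ⟨a, by simp, ?_⟩
        intro y hy hya
        rcases Multiset.mem_cons.mp hy with rfl | hy'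
        · exact hir y (by simp) hya
        · exact hmax y hy' (htr y (Multiset.mem_cons_of_mem hy') a (by simp) m
            (Multiset.mem_cons_of_mem hm) hya hRam)
      · refine ⟨m, Multiset.mem_cons_of_mem hm, ?_⟩
        intro y hy hym
        rcases Multiset.mem_cons.mp hy with rfl | hy'
        · exact hRam hym
        · exact hmax y hy' hym

lemma mem_of_split_left {α : Type*} {l : List α} {A B : Multiset α}
    (h : (↑l : Multiset α) = A + B) {x : α} (hx : x ∈ A) : x ∈ l := by
  have : x ∈ (↑l : Multiset α) := by rw [h]; exact Multiset.mem_add.mpr (Or.inl hx)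
  exact Multiset.mem_coe.mp this

lemma mem_of_split_right {α : Type*} {l : List α} {A B : Multiset α}
    (h : (↑l : Multiset α) = A + B) {x : α} (hx : x ∈ B) : x ∈ l := by
  have : x ∈ (↑l : Multiset α) := by rw [h]; exact Multiset.mem_add.mpr (Or.inr hx)
  exact Multiset.mem_coe.mp this

end StarGames
namespace StarGames

variable {σ X : Type}

/-- A marked multiset-path-order-like relation used to prove acyclicity. -/
inductive Gt (lt : σ → σ → Prop) : Term (σ ⊕ σ) X → Term (σ ⊕ σ) X → Prop where
  | subGt {h : σ} {ws : List (Term (σ ⊕ σ) X)} {s w : Term (σ ⊕ σ) X}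
      (hmem : w ∈ ws) (hgt : Gt lt w s) : Gt lt (.app (.inl h) ws) s
  | subEq {h : σ} {ws : List (Term (σ ⊕ σ) X)} {s w : Term (σ ⊕ σ) X}
      (hmem : w ∈ ws) (heq : Tree.mk w = Tree.mk s) : Gt lt (.app (.inl h) ws) s
  | plainLt {h : σ} {ws : List (Term (σ ⊕ σ) X)} {g : σ} {ts : List (Term (σ ⊕ σ) X)}
      (hlt : lt g h) (hargs : ∀ t ∈ ts, Gt lt (.app (.inl h) ws) t) :
      Gt lt (.app (.inl h) ws) (.app (.inl g) ts)
  | starLt {h : σ} {ws : List (Term (σ ⊕ σ) X)} {g : σ} {ts : List (Term (σ ⊕ σ) X)}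
      (hlt : lt g h) (hargs : ∀ t ∈ ts, Gt lt (.app (.inl h) ws) t) :
      Gt lt (.app (.inl h) ws) (.app (.inr g) ts)
  | plainEq {h : σ} {ws ts : List (Term (σ ⊕ σ) X)}
      (Xm Ym Xm' Zm : Multiset (Term (σ ⊕ σ) X)) (pick : Term (σ ⊕ σ) X → Term (σ ⊕ σ) X)
      (hws : (↑ws : Multiset (Term (σ ⊕ σ) X)) = Xm + Ym)
      (hts : (↑ts : Multiset (Term (σ ⊕ σ) X)) = Xm' + Zm)
      (hX : Xm.map Tree.mk = Xm'.map Tree.mk) (hY : Ym ≠ 0)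
      (hpickMem : ∀ z ∈ Zm, pick z ∈ Ym) (hpickGt : ∀ z ∈ Zm, Gt lt (pick z) z) :
      Gt lt (.app (.inl h) ws) (.app (.inl h) ts)
  | starEq {h : σ} {ws ts : List (Term (σ ⊕ σ) X)}
      (Xm Ym Xm' Zm : Multiset (Term (σ ⊕ σ) X)) (pick : Term (σ ⊕ σ) X → Term (σ ⊕ σ) X)
      (hws : (↑ws : Multiset (Term (σ ⊕ σ) X)) = Xm + Ym)
      (hts : (↑ts : Multiset (Term (σ ⊕ σ) X)) = Xm' + Zm)
      (hX : Xm.map Tree.mk = Xm'.map Tree.mk)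
      (hpickMem : ∀ z ∈ Zm, pick z ∈ Ym) (hpickGt : ∀ z ∈ Zm, Gt lt (pick z) z) :
      Gt lt (.app (.inl h) ws) (.app (.inr h) ts)

variable {lt : σ → σ → Prop}

lemma exists_pick {Y Z : Multiset (Term (σ ⊕ σ) X)}
    (hdom : ∀ z ∈ Z, ∃ y ∈ Y, Gt lt y z) :
    ∃ pick : Term (σ ⊕ σ) X → Term (σ ⊕ σ) X,
      (∀ z ∈ Z, pick z ∈ Y) ∧ (∀ z ∈ Z, Gt lt (pick z) z) := by
  classical
  refine ⟨fun z => if h : ∃ y ∈ Y, Gt lt y z then h.choose else z, ?_, ?_⟩ <;>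
    intro z hz <;> rcases (em (∃ y ∈ Y, Gt lt y z)) with h | h
  · simp only [dif_pos h]; exact h.choose_spec.1
  · exact absurd (hdom z hz) h
  · simp only [dif_pos h]; exact h.choose_spec.2
  · exact absurd (hdom z hz) h

lemma Gt.plainEq' {h : σ} {ws ts : List (Term (σ ⊕ σ) X)}
    (Xm Ym Xm' Zm : Multiset (Term (σ ⊕ σ) X))
    (hws : (↑ws : Multiset (Term (σ ⊕ σ) X)) = Xm + Ym)
    (hts : (↑ts : Multiset (Term (σ ⊕ σ) X)) = Xm' + Zm)
    (hX : Xm.map Tree.mk = Xm'.map Tree.mk) (hY : Ym ≠ 0)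
    (hdom : ∀ z ∈ Zm, ∃ y ∈ Ym, Gt lt y z) :
    Gt lt (.app (.inl h) ws) (.app (.inl h) ts) := by
  obtain ⟨pick, h1, h2⟩ := exists_pick hdom
  exact Gt.plainEq Xm Ym Xm' Zm pick hws hts hX hY h1 h2

lemma Gt.starEq' {h : σ} {ws ts : List (Term (σ ⊕ σ) X)}
    (Xm Ym Xm' Zm : Multiset (Term (σ ⊕ σ) X))
    (hws : (↑ws : Multiset (Term (σ ⊕ σ) X)) = Xm + Ym)
    (hts : (↑ts : Multiset (Term (σ ⊕ σ) X)) = Xm' + Zm)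
    (hX : Xm.map Tree.mk = Xm'.map Tree.mk)
    (hdom : ∀ z ∈ Zm, ∃ y ∈ Ym, Gt lt y z) :
    Gt lt (.app (.inl h) ws) (.app (.inr h) ts) := by
  obtain ⟨pick, h1, h2⟩ := exists_pick hdom
  exact Gt.starEq Xm Ym Xm' Zm pick hws hts hX h1 h2

/-- Extract a `Tree.mk`-equal partner from a multiset equation of images. -/
lemma mk_partner {A B : Multiset (Term (σ ⊕ σ) X)} (h : A.map Tree.mk = B.map Tree.mk)
    {b : Term (σ ⊕ σ) X} (hb : b ∈ B) : ∃ a ∈ A, Tree.mk a = Tree.mk b := by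
  have : Tree.mk b ∈ A.map Tree.mk := by rw [h]; exact Multiset.mem_map_of_mem _ hb
  obtain ⟨a, ha, hq⟩ := Multiset.mem_map.mp this
  exact ⟨a, ha, hq⟩

lemma card_ne_zero_of_map_eq {A B : Multiset (Term (σ ⊕ σ) X)}
    (h : A.map Tree.mk = B.map Tree.mk) (hB : B ≠ 0) : A ≠ 0 := by
  intro h0
  apply hB
  rw [← Multiset.map_eq_zero (f := Tree.mk), ← h, h0]
  simp

/-- `Gt` is invariant under `≃` on the right. -/
lemma gt_congr_right : ∀ {w s : Term (σ ⊕ σ) X}, Gt lt w s →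
    ∀ {s' : Term (σ ⊕ σ) X}, Tree.mk s = Tree.mk s' → Gt lt w s' := by
  intro w s hgt
  induction hgt with
  | subGt hmem _ ih => exact fun heq => .subGt hmem (ih heq)
  | subEq hmem heq' => exact fun heq => .subEq hmem (heq'.trans heq)
  | @plainLt h ws g ts hlt hargs ih =>
    intro s' heq
    cases s' with
    | var y => exact absurd heq qvar_ne.symm  -- wrong direction, fix below
    | app G ts' =>
      obtain ⟨hG, hmap⟩ := qapp_eq heq
      subst hG
      refine .plainLt hlt (fun t' ht' => ?_)
      obtain ⟨t, ht, hq⟩ := mk_partner hmap (Multiset.mem_coe.mpr ht')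
      exact ih t (Multiset.mem_coe.mp ht) hq
  | @starLt h ws g ts hlt hargs ih =>
    intro s' heq
    cases s' with
    | var y => exact absurd heq qvar_ne.symm
    | app G ts' =>
      obtain ⟨hG, hmap⟩ := qapp_eq heq
      subst hG
      refine .starLt hlt (fun t' ht' => ?_)
      obtain ⟨t, ht, hq⟩ := mk_partner hmap (Multiset.mem_coe.mpr ht')
      exact ih t (Multiset.mem_coe.mp ht) hq
  | @plainEq h ws ts Xm Ym Xm' Zm pick hws hts hX hY hpickMem hpickGt ih =>
    intro s' heq
    cases s' with
    | var y => exact absurd heq qvar_ne.symm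
    | app G ts' =>
      obtain ⟨hG, hmap⟩ := qapp_eq heq
      subst hG
      have hsplit : (↑ts' : Multiset (Term (σ ⊕ σ) X)).map Tree.mk = Xm'.map Tree.mk + Zm.map Tree.mk := by
        rw [← hmap, hts, Multiset.map_add]
      obtain ⟨N1, N2, hts', hN1, hN2⟩ := map_split Tree.mk _ _ _ hsplit
      refine Gt.plainEq' Xm Ym N1 N2 hws hts' (hX.trans hN1.symm) hY (fun z' hz' => ?_)
      obtain ⟨z, hz, hq⟩ := mk_partner hN2.symm hz'
      exact ⟨pick z, hpickMem z hz, ih z hz hq⟩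
  | @starEq h ws ts Xm Ym Xm' Zm pick hws hts hX hpickMem hpickGt ih =>
    intro s' heq
    cases s' with
    | var y => exact absurd heq qvar_ne.symm
    | app G ts' =>
      obtain ⟨hG, hmap⟩ := qapp_eq heq
      subst hG
      have hsplit : (↑ts' : Multiset (Term (σ ⊕ σ) X)).map Tree.mk = Xm'.map Tree.mk + Zm.map Tree.mk := by
        rw [← hmap, hts, Multiset.map_add]
      obtain ⟨N1, N2, hts', hN1, hN2⟩ := map_split Tree.mk _ _ _ hsplit
      refine Gt.starEq' Xm Ym N1 N2 hws hts' (hX.trans hN1.symm) (fun z' hz' => ?_)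
      obtain ⟨z, hz, hq⟩ := mk_partner hN2.symm hz'
      exact ⟨pick z, hpickMem z hz, ih z hz hq⟩

end StarGames
namespace StarGames

variable {σ X : Type} {lt : σ → σ → Prop}

/-- `Gt` is invariant under `≃` on the left. -/
lemma gt_congr_left : ∀ {w s : Term (σ ⊕ σ) X}, Gt lt w s →
    ∀ {w' : Term (σ ⊕ σ) X}, Tree.mk w' = Tree.mk w → Gt lt w' s := by
  intro w s hgt
  induction hgt with
  | @subGt h ws s w0 hmem _ ih =>
    intro w' heq
    cases w' with
    | var y => exact absurd heq qvar_ne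
    | app G ws' =>
      obtain ⟨hG, hmap⟩ := qapp_eq heq
      subst hG
      obtain ⟨v, hv, hq⟩ := mk_partner hmap (Multiset.mem_coe.mpr hmem)
      exact .subGt (Multiset.mem_coe.mp hv) (ih hq)
  | @subEq h ws s w0 hmem heq0 =>
    intro w' heq
    cases w' with
    | var y => exact absurd heq qvar_ne
    | app G ws' =>
      obtain ⟨hG, hmap⟩ := qapp_eq heq
      subst hG
      obtain ⟨v, hv, hq⟩ := mk_partner hmap (Multiset.mem_coe.mpr hmem)
      exact .subEq (Multiset.mem_coe.mp hv) (hq.trans heq0)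
  | @plainLt h ws g ts hlt hargs ih =>
    intro w' heq
    cases w' with
    | var y => exact absurd heq qvar_ne
    | app G ws' =>
      obtain ⟨hG, _⟩ := qapp_eq heq
      subst hG
      exact .plainLt hlt (fun t ht => ih t ht heq)
  | @starLt h ws g ts hlt hargs ih =>
    intro w' heq
    cases w' with
    | var y => exact absurd heq qvar_ne
    | app G ws' =>
      obtain ⟨hG, _⟩ := qapp_eq heq
      subst hG
      exact .starLt hlt (fun t ht => ih t ht heq)
  | @plainEq h ws ts Xm Ym Xm' Zm pick hws hts hX hY hpickMem hpickGt ih =>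
    intro w' heq
    cases w' with
    | var y => exact absurd heq qvar_ne
    | app G ws' =>
      obtain ⟨hG, hmap⟩ := qapp_eq heq
      subst hG
      have hsplit : (↑ws' : Multiset (Term (σ ⊕ σ) X)).map Tree.mk
          = Xm.map Tree.mk + Ym.map Tree.mk := by
        rw [hmap, hws, Multiset.map_add]
      obtain ⟨M1, M2, hws', hM1, hM2⟩ := map_split Tree.mk _ _ _ hsplit
      refine Gt.plainEq' M1 M2 Xm' Zm hws' hts (hM1.trans hX)
        (card_ne_zero_of_map_eq hM2 hY) (fun z hz => ?_)
      obtain ⟨y', hy', hq⟩ := mk_partner hM2 (hpickMem z hz)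
      exact ⟨y', hy', ih z hz hq⟩
  | @starEq h ws ts Xm Ym Xm' Zm pick hws hts hX hpickMem hpickGt ih =>
    intro w' heq
    cases w' with
    | var y => exact absurd heq qvar_ne
    | app G ws' =>
      obtain ⟨hG, hmap⟩ := qapp_eq heq
      subst hG
      have hsplit : (↑ws' : Multiset (Term (σ ⊕ σ) X)).map Tree.mk
          = Xm.map Tree.mk + Ym.map Tree.mk := by
        rw [hmap, hws, Multiset.map_add]
      obtain ⟨M1, M2, hws', hM1, hM2⟩ := map_split Tree.mk _ _ _ hsplit
      refine Gt.starEq' M1 M2 Xm' Zm hws' hts (hM1.trans hX) (fun z hz => ?_)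
      obtain ⟨y', hy', hq⟩ := mk_partner hM2 (hpickMem z hz)
      exact ⟨y', hy', ih z hz hq⟩

end StarGames
namespace StarGames

variable {σ X : Type} {lt : σ → σ → Prop}

lemma add_ne_zero_right {α : Type*} {A B : Multiset α} (hB : B ≠ 0) : A + B ≠ 0 := by
  intro h0
  exact hB (add_eq_zero.mp h0).2

lemma gt_trans_n (htrans : Transitive lt) :
    ∀ n, ∀ a b c : Term (σ ⊕ σ) X, tsize a + tsize b + tsize c ≤ n →
      Gt lt a b → Gt lt b c → Gt lt a c := by
  intro n
  induction n using Nat.strong_induction_on with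
  | _ n IH =>
  intro a b c hn hab hbc
  cases hab with
  | @subGt h ws _ w hmem hwgt =>
    have hsz : tsize w + tsize b + tsize c < n := by
      have := tsize_lt_of_mem (f := Sum.inl h) hmem; omega
    exact .subGt hmem (IH _ hsz w b c le_rfl hwgt hbc)
  | @subEq h ws _ w hmem heq =>
    exact .subGt hmem (gt_congr_left hbc heq)
  | @plainLt h ws g bs hlt1 hargs =>
    have hab' : Gt lt (.app (.inl h) ws) (.app (.inl g) bs) := .plainLt hlt1 hargs
    cases hbc with
    | @subGt _ _ _ w hmem hwgt =>
      have hsz : tsize (Term.app (Sum.inl h) ws) + tsize w + tsize c < n := by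
        have := tsize_lt_of_mem (f := Sum.inl g) hmem; omega
      exact IH _ hsz _ _ _ le_rfl (hargs w hmem) hwgt
    | @subEq _ _ _ w hmem heq => exact gt_congr_right (hargs w hmem) heq
    | @plainLt _ _ g2 cs hlt2 hargs2 =>
      refine .plainLt (htrans hlt2 hlt1) (fun t ht => ?_)
      have hsz : tsize (Term.app (Sum.inl h) ws) + tsize (Term.app (Sum.inl g) bs)
          + tsize t < n := by
        have := tsize_lt_of_mem (f := Sum.inl g2) ht; omega
      exact IH _ hsz _ _ _ le_rfl hab' (hargs2 t ht)
    | @starLt _ _ g2 cs hlt2 hargs2 =>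
      refine .starLt (htrans hlt2 hlt1) (fun t ht => ?_)
      have hsz : tsize (Term.app (Sum.inl h) ws) + tsize (Term.app (Sum.inl g) bs)
          + tsize t < n := by
        have := tsize_lt_of_mem (f := Sum.inr g2) ht; omega
      exact IH _ hsz _ _ _ le_rfl hab' (hargs2 t ht)
    | @plainEq _ _ cs Xm Ym Xm' Zm pick hbs hcs hX hY hm hg =>
      refine .plainLt hlt1 (fun t ht => ?_)
      have htm : t ∈ Xm' + Zm := by rw [← hcs]; exact Multiset.mem_coe.mpr ht
      rcases Multiset.mem_add.mp htm with hX' | hZ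
      · obtain ⟨x, hx, hq⟩ := mk_partner hX hX'
        exact gt_congr_right (hargs x (mem_of_split_left hbs hx)) hq
      · have hpb : pick t ∈ bs := mem_of_split_right hbs (hm t hZ)
        have hsz : tsize (Term.app (Sum.inl h) ws) + tsize (pick t) + tsize t < n := by
          have h1 := tsize_lt_of_mem (f := Sum.inl g) hpb
          have h2 := tsize_lt_of_mem (f := Sum.inl g) ht
          omega
        exact IH _ hsz _ _ _ le_rfl (hargs _ hpb) (hg t hZ)
    | @starEq _ _ cs Xm Ym Xm' Zm pick hbs hcs hX hm hg =>
      refine .starLt hlt1 (fun t ht => ?_)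
      have htm : t ∈ Xm' + Zm := by rw [← hcs]; exact Multiset.mem_coe.mpr ht
      rcases Multiset.mem_add.mp htm with hX' | hZ
      · obtain ⟨x, hx, hq⟩ := mk_partner hX hX'
        exact gt_congr_right (hargs x (mem_of_split_left hbs hx)) hq
      · have hpb : pick t ∈ bs := mem_of_split_right hbs (hm t hZ)
        have hsz : tsize (Term.app (Sum.inl h) ws) + tsize (pick t) + tsize t < n := by
          have h1 := tsize_lt_of_mem (f := Sum.inl g) hpb
          have h2 := tsize_lt_of_mem (f := Sum.inr g) ht
          omega
        exact IH _ hsz _ _ _ le_rfl (hargs _ hpb) (hg t hZ)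
  | @plainEq h ws bs Xm1 Ym1 Xm1' Zm1 pick1 has hbs1 hX1 hY1 hm1 hg1 =>
    have hab' : Gt lt (.app (.inl h) ws) (.app (.inl h) bs) :=
      .plainEq _ _ _ _ _ has hbs1 hX1 hY1 hm1 hg1
    cases hbc with
    | @subGt _ _ _ w hmem hwgt =>
      have hw : w ∈ Xm1' + Zm1 := by rw [← hbs1]; exact Multiset.mem_coe.mpr hmem
      rcases Multiset.mem_add.mp hw with hX' | hZ
      · obtain ⟨x, hx, hq⟩ := mk_partner hX1 hX'
        exact .subGt (mem_of_split_left has hx) (gt_congr_left hwgt hq)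
      · have hy := hm1 w hZ
        have hsz : tsize (pick1 w) + tsize w + tsize c < n := by
          have h1 := tsize_lt_of_mem (f := Sum.inl h) (mem_of_split_right has hy)
          have h2 := tsize_lt_of_mem (f := Sum.inl h) hmem
          omega
        exact .subGt (mem_of_split_right has hy) (IH _ hsz _ _ _ le_rfl (hg1 w hZ) hwgt)
    | @subEq _ _ _ w hmem heq =>
      have hw : w ∈ Xm1' + Zm1 := by rw [← hbs1]; exact Multiset.mem_coe.mpr hmem
      rcases Multiset.mem_add.mp hw with hX' | hZ
      · obtain ⟨x, hx, hq⟩ := mk_partner hX1 hX'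
        exact .subEq (mem_of_split_left has hx) (hq.trans heq)
      · exact .subGt (mem_of_split_right has (hm1 w hZ))
          (gt_congr_right (hg1 w hZ) heq)
    | @plainLt _ _ g2 cs hlt2 hargs2 =>
      refine .plainLt hlt2 (fun t ht => ?_)
      have hsz : tsize (Term.app (Sum.inl h) ws) + tsize (Term.app (Sum.inl h) bs)
          + tsize t < n := by
        have := tsize_lt_of_mem (f := Sum.inl g2) ht; omega
      exact IH _ hsz _ _ _ le_rfl hab' (hargs2 t ht)
    | @starLt _ _ g2 cs hlt2 hargs2 =>
      refine .starLt hlt2 (fun t ht => ?_)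
      have hsz : tsize (Term.app (Sum.inl h) ws) + tsize (Term.app (Sum.inl h) bs)
          + tsize t < n := by
        have := tsize_lt_of_mem (f := Sum.inr g2) ht; omega
      exact IH _ hsz _ _ _ le_rfl hab' (hargs2 t ht)
    | @plainEq _ _ cs Xm2 Ym2 Xm2' Zm2 pick2 hbs2 hcs hX2 hY2 hm2 hg2 =>
      have hbb : Xm1' + Zm1 = Xm2 + Ym2 := by rw [← hbs1, hbs2]
      obtain ⟨P, Q, R, S, hXQ, hZS, hXR, hYS⟩ := riesz _ _ _ _ hbb
      have hx1 : Xm1.map Tree.mk = P.map Tree.mk + Q.map Tree.mk := by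
        rw [hX1, hXQ, Multiset.map_add]
      obtain ⟨P0, Q0, hXm1, hP0, hQ0⟩ := map_split Tree.mk _ _ _ hx1
      have hx2 : Xm2'.map Tree.mk = P.map Tree.mk + R.map Tree.mk := by
        rw [← hX2, hXR, Multiset.map_add]
      obtain ⟨P', R', hXm2', hP', hR'⟩ := map_split Tree.mk _ _ _ hx2
      refine Gt.plainEq' P0 (Q0 + Ym1) P' (R' + Zm2)
        (by rw [has, hXm1, add_assoc])
        (by rw [hcs, hXm2', add_assoc])
        (hP0.trans hP'.symm)
        (add_ne_zero_right hY1)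
        (fun z hz => ?_)
      rcases Multiset.mem_add.mp hz with hzR | hzZ
      · obtain ⟨r, hr, hq⟩ := mk_partner hR'.symm hzR
        have hrZ : r ∈ Zm1 := by rw [hZS]; exact Multiset.mem_add.mpr (Or.inl hr)
        exact ⟨pick1 r, Multiset.mem_add.mpr (Or.inr (hm1 r hrZ)),
          gt_congr_right (hg1 r hrZ) hq⟩
      · have hy2 : pick2 z ∈ Q + S := by rw [← hYS]; exact hm2 z hzZ
        rcases Multiset.mem_add.mp hy2 with hQ | hS
        · obtain ⟨q0, hq0, hq⟩ := mk_partner hQ0 hQ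
          exact ⟨q0, Multiset.mem_add.mpr (Or.inl hq0),
            gt_congr_left (hg2 z hzZ) hq⟩
        · have hy2Z : pick2 z ∈ Zm1 := by rw [hZS]; exact Multiset.mem_add.mpr (Or.inr hS)
          have hy1 : pick1 (pick2 z) ∈ Ym1 := hm1 _ hy2Z
          have hsz : tsize (pick1 (pick2 z)) + tsize (pick2 z) + tsize z < n := by
            have h1 := tsize_lt_of_mem (f := Sum.inl h) (mem_of_split_right has hy1)
            have h2 := tsize_lt_of_mem (f := Sum.inl h) (mem_of_split_right hbs1 hy2Z)
            have h3 := tsize_lt_of_mem (f := Sum.inl h) (mem_of_split_right hcs hzZ)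
            omega
          exact ⟨pick1 (pick2 z), Multiset.mem_add.mpr (Or.inr hy1),
            IH _ hsz _ _ _ le_rfl (hg1 _ hy2Z) (hg2 z hzZ)⟩
    | @starEq _ _ cs Xm2 Ym2 Xm2' Zm2 pick2 hbs2 hcs hX2 hm2 hg2 =>
      have hbb : Xm1' + Zm1 = Xm2 + Ym2 := by rw [← hbs1, hbs2]
      obtain ⟨P, Q, R, S, hXQ, hZS, hXR, hYS⟩ := riesz _ _ _ _ hbb
      have hx1 : Xm1.map Tree.mk = P.map Tree.mk + Q.map Tree.mk := by
        rw [hX1, hXQ, Multiset.map_add]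
      obtain ⟨P0, Q0, hXm1, hP0, hQ0⟩ := map_split Tree.mk _ _ _ hx1
      have hx2 : Xm2'.map Tree.mk = P.map Tree.mk + R.map Tree.mk := by
        rw [← hX2, hXR, Multiset.map_add]
      obtain ⟨P', R', hXm2', hP', hR'⟩ := map_split Tree.mk _ _ _ hx2
      refine Gt.starEq' P0 (Q0 + Ym1) P' (R' + Zm2)
        (by rw [has, hXm1, add_assoc])
        (by rw [hcs, hXm2', add_assoc])
        (hP0.trans hP'.symm)
        (fun z hz => ?_)
      rcases Multiset.mem_add.mp hz with hzR | hzZ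
      · obtain ⟨r, hr, hq⟩ := mk_partner hR'.symm hzR
        have hrZ : r ∈ Zm1 := by rw [hZS]; exact Multiset.mem_add.mpr (Or.inl hr)
        exact ⟨pick1 r, Multiset.mem_add.mpr (Or.inr (hm1 r hrZ)),
          gt_congr_right (hg1 r hrZ) hq⟩
      · have hy2 : pick2 z ∈ Q + S := by rw [← hYS]; exact hm2 z hzZ
        rcases Multiset.mem_add.mp hy2 with hQ | hS
        · obtain ⟨q0, hq0, hq⟩ := mk_partner hQ0 hQ
          exact ⟨q0, Multiset.mem_add.mpr (Or.inl hq0),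
            gt_congr_left (hg2 z hzZ) hq⟩
        · have hy2Z : pick2 z ∈ Zm1 := by rw [hZS]; exact Multiset.mem_add.mpr (Or.inr hS)
          have hy1 : pick1 (pick2 z) ∈ Ym1 := hm1 _ hy2Z
          have hsz : tsize (pick1 (pick2 z)) + tsize (pick2 z) + tsize z < n := by
            have h1 := tsize_lt_of_mem (f := Sum.inl h) (mem_of_split_right has hy1)
            have h2 := tsize_lt_of_mem (f := Sum.inl h) (mem_of_split_right hbs1 hy2Z)
            have h3 := tsize_lt_of_mem (f := Sum.inr h) (mem_of_split_right hcs hzZ)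
            omega
          exact ⟨pick1 (pick2 z), Multiset.mem_add.mpr (Or.inr hy1),
            IH _ hsz _ _ _ le_rfl (hg1 _ hy2Z) (hg2 z hzZ)⟩
  | starLt hlt hargs => cases hbc
  | starEq Xm Ym Xm' Zm pick hws hts hX hm hg => cases hbc

lemma gt_trans (htrans : Transitive lt) {a b c : Term (σ ⊕ σ) X}
    (hab : Gt lt a b) (hbc : Gt lt b c) : Gt lt a c :=
  gt_trans_n htrans _ a b c le_rfl hab hbc

end StarGames
namespace StarGames

variable {σ X : Type} {lt : σ → σ → Prop}

lemma gt_irrefl_n (hirr : Irreflexive lt) (htrans : Transitive lt) :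
    ∀ n, ∀ t : Term (σ ⊕ σ) X, tsize t ≤ n → ¬ Gt lt t t := by
  intro n
  induction n using Nat.strong_induction_on with
  | _ n IH =>
  intro t hts hgt
  cases hgt with
  | @subGt h ws _ w hmem hwgt =>
    have h1 : Gt lt (Term.app (Sum.inl h) ws) w := .subEq hmem rfl
    have h2 : Gt lt w w := gt_trans htrans hwgt h1
    have hsz := tsize_lt_of_mem (f := Sum.inl h) hmem
    exact IH (tsize w) (by omega) w le_rfl h2
  | @subEq h ws _ w hmem heq =>
    have h1 := mk_eq_tsize heq
    have h2 := tsize_lt_of_mem (f := Sum.inl h) hmem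
    omega
  | plainLt hlt _ => exact hirr _ hlt
  | @plainEq h ws _ Xm Ym Xm' Zm pick hws hts' hX hY hm hg =>
    -- ↑ws = Xm + Ym = Xm' + Zm
    have hmapEq : Ym.map Tree.mk = Zm.map Tree.mk := by
      have h0 : Xm.map Tree.mk + Ym.map Tree.mk = Xm'.map Tree.mk + Zm.map Tree.mk := by
        rw [← Multiset.map_add, ← Multiset.map_add, ← hws, ← hts']
      rw [hX] at h0
      exact add_left_cancel h0
    set R : Tree (σ ⊕ σ) X → Tree (σ ⊕ σ) X → Prop :=
      fun A B => ∃ a b, A = Tree.mk a ∧ B = Tree.mk b ∧ Gt lt a b with hR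
    have hWne : Ym.map Tree.mk ≠ 0 := by
      intro h0; exact hY (by simpa using Multiset.map_eq_zero.mp h0)
    have htr : ∀ x ∈ Ym.map Tree.mk, ∀ y ∈ Ym.map Tree.mk, ∀ z ∈ Ym.map Tree.mk,
        R x y → R y z → R x z := by
      rintro x _ y _ z _ ⟨a, b, rfl, rfl, hab⟩ ⟨b', c, hbb', rfl, hbc⟩
      exact ⟨a, c, rfl, rfl, gt_trans htrans (gt_congr_right hab hbb') hbc⟩
    have hirrW : ∀ x ∈ Ym.map Tree.mk, ¬ R x x := by
      intro x hx hRx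
      obtain ⟨y, hy, rfl⟩ := Multiset.mem_map.mp hx
      obtain ⟨a, b, ha, hb, hab⟩ := hRx
      have : Gt lt y y := gt_congr_right (gt_congr_left hab ha) hb.symm
      have hyws : y ∈ ws := mem_of_split_right hws hy
      have hsz := tsize_lt_of_mem (f := Sum.inl h) hyws
      exact IH (tsize y) (by omega) y le_rfl this
    obtain ⟨m, hmW, hmax⟩ := exists_max R (Ym.map Tree.mk) hWne htr hirrW
    have hmZ : m ∈ Zm.map Tree.mk := by rw [← hmapEq]; exact hmW
    obtain ⟨z, hz, hzq⟩ := Multiset.mem_map.mp hmZ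
    have hRzm : R (Tree.mk (pick z)) m :=
      ⟨pick z, z, rfl, hzq.symm, hg z hz⟩
    exact hmax (Tree.mk (pick z)) (Multiset.mem_map_of_mem _ (hm z hz)) hRzm

lemma gt_irrefl (hirr : Irreflexive lt) (htrans : Transitive lt)
    (t : Term (σ ⊕ σ) X) : ¬ Gt lt t t :=
  gt_irrefl_n hirr htrans _ t le_rfl

end StarGames
namespace StarGames

variable {σ X : Type} {lt : σ → σ → Prop}

lemma map_single_split {A : Multiset (Term (σ ⊕ σ) X)} {b : Term (σ ⊕ σ) X}
    (h : A.map Tree.mk = {Tree.mk b}) : ∃ a, A = {a} ∧ Tree.mk a = Tree.mk b := by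
  have hcard : Multiset.card A = 1 := by
    have := congrArg Multiset.card h
    simpa using this
  obtain ⟨a, rfl⟩ := Multiset.card_eq_one.mp hcard
  refine ⟨a, rfl, ?_⟩
  have : ({Tree.mk a} : Multiset (Tree (σ ⊕ σ) X)) = {Tree.mk b} := by simpa using h
  exact Multiset.singleton_inj.mp this

lemma mem_ne_zero {α : Type*} {A : Multiset α} {a : α} (h : a ∈ A) : A ≠ 0 := by
  intro h0; rw [h0] at h; simp at h

/-- preservation of `Gt` under a `put` step on the right. -/
lemma gt_put (f : σ) (ts : List (Term (σ ⊕ σ) X)) :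
    ∀ n (w : Term (σ ⊕ σ) X), tsize w ≤ n → StarFreeTerm w →
      (Gt lt w (.app (.inl f) ts) → Gt lt w (.app (.inr f) ts)) ∧
      (Tree.mk w = Tree.mk (.app (.inl f) ts) → Gt lt w (.app (.inr f) ts)) := by
  intro n
  induction n using Nat.strong_induction_on with
  | _ n IH =>
  intro w hw hsf
  constructor
  · intro hgt
    cases hgt with
    | @subGt h ws _ w0 hmem hwgt =>
      have hsz := tsize_lt_of_mem (f := Sum.inl h) hmem
      exact .subGt hmem ((IH (tsize w0) (by omega) w0 le_rfl (starFree_arg hsf hmem)).1 hwgt)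
    | @subEq h ws _ w0 hmem heq =>
      have hsz := tsize_lt_of_mem (f := Sum.inl h) hmem
      exact .subGt hmem ((IH (tsize w0) (by omega) w0 le_rfl (starFree_arg hsf hmem)).2 heq)
    | plainLt hlt hargs => exact .starLt hlt hargs
    | plainEq Xm Ym Xm' Zm pick hws hts hX hY hm hg =>
      exact .starEq Xm Ym Xm' Zm pick hws hts hX hm hg
  · intro heq
    cases w with
    | var x => exact absurd heq qvar_ne
    | app s0 ws =>
      obtain ⟨hs0, hmap⟩ := qapp_eq heq
      subst hs0
      refine Gt.starEq' (↑ws) 0 (↑ts) 0 (by simp) (by simp) hmap (fun z hz => ?_)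
      simp at hz

/-- preservation of `Gt` under a `select` step on the right. -/
lemma gt_select (f : σ) (xs : List (Term (σ ⊕ σ) X)) (y : Term (σ ⊕ σ) X)
    (zs : List (Term (σ ⊕ σ) X)) :
    ∀ n (w : Term (σ ⊕ σ) X), tsize w ≤ n → StarFreeTerm w →
      Gt lt w (.app (.inr f) (xs ++ y :: zs)) → Gt lt w y := by
  intro n
  induction n using Nat.strong_induction_on with
  | _ n IH =>
  intro w hw hsf hgt
  cases hgt with
  | @subGt h ws _ w0 hmem hwgt =>
    have hsz := tsize_lt_of_mem (f := Sum.inl h) hmem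
    exact .subGt hmem (IH (tsize w0) (by omega) w0 le_rfl (starFree_arg hsf hmem) hwgt)
  | @subEq h ws _ w0 hmem heq =>
    exact absurd heq (starFree_not_mk_inr (starFree_arg hsf hmem))
  | starLt hlt hargs =>
    exact hargs y (by simp)
  | starEq Xm Ym Xm' Zm pick hws hts hX hm hg =>
    have hy : y ∈ Xm' + Zm := by
      rw [← hts]; exact Multiset.mem_coe.mpr (by simp)
    rcases Multiset.mem_add.mp hy with hX' | hZ
    · obtain ⟨x, hx, hq⟩ := mk_partner hX hX'
      exact .subEq (mem_of_split_left hws hx) hq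
    · exact .subGt (mem_of_split_right hws (hm y hZ)) (hg y hZ)

/-- preservation of `Gt` under a `copy` step on the right. -/
lemma gt_copy (htrans : Transitive lt) (f g : σ) (k : ℕ) (ts : List (Term (σ ⊕ σ) X))
    (hgf : lt g f) :
    ∀ n (w : Term (σ ⊕ σ) X), tsize w ≤ n → StarFreeTerm w →
      Gt lt w (.app (.inr f) ts) →
      Gt lt w (.app (.inl g) (List.replicate k (Term.app (.inr f) ts))) := by
  intro n
  induction n using Nat.strong_induction_on with
  | _ n IH =>
  intro w hw hsf hgt
  cases hgt with
  | @subGt h ws _ w0 hmem hwgt =>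
    have hsz := tsize_lt_of_mem (f := Sum.inl h) hmem
    exact .subGt hmem (IH (tsize w0) (by omega) w0 le_rfl (starFree_arg hsf hmem) hwgt)
  | @subEq h ws _ w0 hmem heq =>
    exact absurd heq (starFree_not_mk_inr (starFree_arg hsf hmem))
  | @starLt h ws _ _ hlt hargs =>
    refine .plainLt (htrans hgf hlt) (fun t ht => ?_)
    rw [List.eq_of_mem_replicate ht]
    exact .starLt hlt hargs
  | starEq Xm Ym Xm' Zm pick hws hts hX hm hg =>
    refine .plainLt hgf (fun t ht => ?_)
    rw [List.eq_of_mem_replicate ht]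
    exact .starEq Xm Ym Xm' Zm pick hws hts hX hm hg

/-- preservation of `Gt` under a `down` step on the right. -/
lemma gt_down (f g : σ) (k : ℕ) (xs ys zs : List (Term (σ ⊕ σ) X)) :
    ∀ n (w : Term (σ ⊕ σ) X), tsize w ≤ n → StarFreeTerm w →
      Gt lt w (.app (.inr f) (xs ++ Term.app (.inl g) ys :: zs)) →
      Gt lt w (.app (.inl f) (xs ++ List.replicate k (Term.app (.inr g) ys) ++ zs)) := by
  intro n
  induction n using Nat.strong_induction_on with
  | _ n IH =>
  intro w hw hsf hgt
  have hcoe : (↑(xs ++ Term.app (Sum.inl g) ys :: zs) : Multiset (Term (σ ⊕ σ) X))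
      = Term.app (Sum.inl g) ys ::ₘ (↑xs + ↑zs) := by
    show ((↑xs + (Term.app (Sum.inl g) ys ::ₘ ↑zs)) : Multiset (Term (σ ⊕ σ) X)) = _
    rw [Multiset.add_cons]  -- name guess
  have hcoe2 : (↑(xs ++ List.replicate k (Term.app (.inr g) ys) ++ zs)
      : Multiset (Term (σ ⊕ σ) X))
      = (↑xs + ↑zs) + Multiset.replicate k (Term.app (.inr g) ys) := by
    show ((↑xs + ↑(List.replicate k (Term.app (.inr g) ys))) + ↑zs : Multiset (Term (σ ⊕ σ) X)) = _
    rw [Multiset.coe_replicate]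
    ac_rfl -- may fail
  cases hgt with
  | @subGt h ws _ w0 hmem hwgt =>
    have hsz := tsize_lt_of_mem (f := Sum.inl h) hmem
    exact .subGt hmem (IH (tsize w0) (by omega) w0 le_rfl (starFree_arg hsf hmem) hwgt)
  | @subEq h ws _ w0 hmem heq =>
    exact absurd heq (starFree_not_mk_inr (starFree_arg hsf hmem))
  | @starLt h ws _ _ hlt hargs =>
    refine .plainLt hlt (fun t ht => ?_)
    rcases List.mem_append.mp ht with ht' | htz
    · rcases List.mem_append.mp ht' with htx | htr
      · exact hargs t (by simp [htx])
      · rw [List.eq_of_mem_replicate htr]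
        have hgys : Gt lt (Term.app (Sum.inl h) ws) (Term.app (Sum.inl g) ys) :=
          hargs _ (by simp)
        exact (gt_put g ys (tsize (Term.app (Sum.inl h) ws)) _ le_rfl hsf).1 hgys
    · exact hargs t (by simp [htz])
  | @starEq h ws _ Xm Ym Xm' Zm pick hws hts hX hm hg =>
    -- h = f, w = app (inl f) ws
    rw [hcoe] at hts
    have hgymem : Term.app (Sum.inl g) ys ∈ Xm' + Zm := by
      rw [← hts]; simp
    rcases Multiset.mem_add.mp hgymem with hXg | hZg
    · -- the matched copy sits in the X'-part
      obtain ⟨X1', rfl⟩ := Multiset.exists_cons_of_mem hXg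
      have hcancel : (↑xs + ↑zs : Multiset (Term (σ ⊕ σ) X)) = X1' + Zm := by
        have h0 : Term.app (Sum.inl g) ys ::ₘ (↑xs + ↑zs)
            = Term.app (Sum.inl g) ys ::ₘ (X1' + Zm) := by
          rw [hts, Multiset.cons_add]
        exact (Multiset.cons_inj_right _).mp h0
      have hXsplit : Xm.map Tree.mk
          = ({Tree.mk (Term.app (Sum.inl g) ys)} : Multiset _) + X1'.map Tree.mk := by
        rw [hX]; simp [Multiset.singleton_add]
      obtain ⟨Xa, X1, hXm, hXa, hX1⟩ := map_split Tree.mk _ _ _ hXsplit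
      obtain ⟨x0, rfl, hx0q⟩ := map_single_split hXa
      have hx0sf : StarFreeTerm x0 :=
        starFree_arg hsf (mem_of_split_left hws (by rw [hXm]; simp))
      have hx0gt : Gt lt x0 (Term.app (Sum.inr g) ys) :=
        (gt_put g ys (tsize x0) x0 le_rfl hx0sf).2 hx0q
      refine Gt.plainEq' X1 (x0 ::ₘ Ym) X1' (Zm + Multiset.replicate k (Term.app (.inr g) ys))
        ?_ ?_ hX1 (by simp) (fun z hz => ?_)
      · rw [hws, hXm]
        simp [Multiset.singleton_add, Multiset.cons_add, Multiset.add_cons]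
        try ac_rfl
      · rw [hcoe2, hcancel]
        ac_rfl
      · rcases Multiset.mem_add.mp hz with hz1 | hz2
        · exact ⟨pick z, Multiset.mem_cons_of_mem (hm z hz1), hg z hz1⟩
        · rw [Multiset.eq_of_mem_replicate hz2]
          exact ⟨x0, Multiset.mem_cons_self _ _, hx0gt⟩
    · -- the matched copy sits in the Z-part
      obtain ⟨Z0, rfl⟩ := Multiset.exists_cons_of_mem hZg
      have hcancel : (↑xs + ↑zs : Multiset (Term (σ ⊕ σ) X)) = Xm' + Z0 := by
        have h0 : Term.app (Sum.inl g) ys ::ₘ (↑xs + ↑zs)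
            = Term.app (Sum.inl g) ys ::ₘ (Xm' + Z0) := by
          rw [hts, Multiset.add_cons]
        exact (Multiset.cons_inj_right _).mp h0
      have hy0 : pick (Term.app (Sum.inl g) ys) ∈ Ym := hm _ (by simp)
      have hy0sf : StarFreeTerm (pick (Term.app (Sum.inl g) ys)) :=
        starFree_arg hsf (mem_of_split_right hws hy0)
      have hy0gt : Gt lt (pick (Term.app (Sum.inl g) ys)) (Term.app (Sum.inr g) ys) :=
        (gt_put g ys _ _ le_rfl hy0sf).1 (hg _ (by simp))
      refine Gt.plainEq' Xm Ym Xm' (Z0 + Multiset.replicate k (Term.app (.inr g) ys))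
        hws ?_ hX (mem_ne_zero hy0) (fun z hz => ?_)
      · rw [hcoe2, hcancel]
        ac_rfl
      · rcases Multiset.mem_add.mp hz with hz1 | hz2
        · exact ⟨pick z, hm z (Multiset.mem_cons_of_mem hz1), hg z (Multiset.mem_cons_of_mem hz1)⟩
        · rw [Multiset.eq_of_mem_replicate hz2]
          exact ⟨pick (Term.app (Sum.inl g) ys), hy0, hy0gt⟩

end StarGames
namespace StarGames

variable {σ X : Type} {lt : σ → σ → Prop}

lemma gt_pres (htrans : Transitive lt) :
    ∀ {s s' : Term (σ ⊕ σ) X}, Rewrite (StarRoot lt) s s' →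
      ∀ w, StarFreeTerm w →
        (Gt lt w s → Gt lt w s') ∧ (Tree.mk w = Tree.mk s → Gt lt w s') := by
  intro s s' hrw
  induction hrw with
  | root hr =>
    cases hr with
    | put f ts =>
      intro w hsf
      exact ⟨(gt_put f ts _ w le_rfl hsf).1, (gt_put f ts _ w le_rfl hsf).2⟩
    | select f1 xs1 y1 zs1 =>
      intro w hsf
      refine ⟨?_, fun heq => absurd heq (starFree_not_mk_inr hsf)⟩
      exact gt_select _ _ _ _ _ w le_rfl hsf
    | copy f g k ts hlt =>
      intro w hsf
      exact ⟨gt_copy htrans f g k ts hlt _ w le_rfl hsf,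
        fun heq => absurd heq (starFree_not_mk_inr hsf)⟩
    | down f g k xs ys zs =>
      intro w hsf
      exact ⟨gt_down f g k xs ys zs _ w le_rfl hsf,
        fun heq => absurd heq (starFree_not_mk_inr hsf)⟩
  | @congr a a' F pre post hstep IHstep =>
    suffices H : ∀ n w, tsize w ≤ n → StarFreeTerm w →
        (Gt lt w (.app F (pre ++ a :: post)) → Gt lt w (.app F (pre ++ a' :: post))) ∧
        (Tree.mk w = Tree.mk (.app F (pre ++ a :: post)) →
          Gt lt w (.app F (pre ++ a' :: post))) by
      exact fun w hsf => H _ w le_rfl hsf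
    intro n
    induction n using Nat.strong_induction_on with
    | _ n IH =>
    intro w hw hsf
    have hcons : (↑(pre ++ a :: post) : Multiset (Term (σ ⊕ σ) X)) = a ::ₘ (↑pre + ↑post) := by
      show (↑pre + (a ::ₘ ↑post) : Multiset (Term (σ ⊕ σ) X)) = _
      rw [Multiset.add_cons]
    have hcons' : (↑(pre ++ a' :: post) : Multiset (Term (σ ⊕ σ) X)) = a' ::ₘ (↑pre + ↑post) := by
      show (↑pre + (a' ::ₘ ↑post) : Multiset (Term (σ ⊕ σ) X)) = _
      rw [Multiset.add_cons]
    constructor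
    · intro hgt
      cases hgt with
      | @subGt h ws _ w0 hmem hwgt =>
        have hsz := tsize_lt_of_mem (f := Sum.inl h) hmem
        exact .subGt hmem ((IH _ (by omega) w0 le_rfl (starFree_arg hsf hmem)).1 hwgt)
      | @subEq h ws _ w0 hmem heq =>
        have hsz := tsize_lt_of_mem (f := Sum.inl h) hmem
        exact .subGt hmem ((IH _ (by omega) w0 le_rfl (starFree_arg hsf hmem)).2 heq)
      | plainLt hlt hargs =>
        refine .plainLt hlt (fun t ht => ?_)
        rcases List.mem_append.mp ht with hpre | hrest
        · exact hargs t (List.mem_append.mpr (Or.inl hpre))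
        · rcases List.mem_cons.mp hrest with rfl | hpost
          · exact (IHstep _ hsf).1 (hargs a (by simp))
          · exact hargs t (by simp [hpost])
      | starLt hlt hargs =>
        refine .starLt hlt (fun t ht => ?_)
        rcases List.mem_append.mp ht with hpre | hrest
        · exact hargs t (List.mem_append.mpr (Or.inl hpre))
        · rcases List.mem_cons.mp hrest with rfl | hpost
          · exact (IHstep _ hsf).1 (hargs a (by simp))
          · exact hargs t (by simp [hpost])
      | plainEq Xm Ym Xm' Zm pick hws hts hX hY hm hg =>
        rw [hcons] at hts
        have hamem : a ∈ Xm' + Zm := by rw [← hts]; simp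
        rcases Multiset.mem_add.mp hamem with hXa | hZa
        · obtain ⟨X1', rfl⟩ := Multiset.exists_cons_of_mem hXa
          have hcancel : (↑pre + ↑post : Multiset (Term (σ ⊕ σ) X)) = X1' + Zm := by
            have h0 : a ::ₘ (↑pre + ↑post : Multiset (Term (σ ⊕ σ) X))
                = a ::ₘ (X1' + Zm) := by rw [hts, Multiset.cons_add]
            exact (Multiset.cons_inj_right _).mp h0
          have hXsplit : Xm.map Tree.mk
              = ({Tree.mk a} : Multiset _) + X1'.map Tree.mk := by
            rw [hX]; simp [Multiset.singleton_add]
          obtain ⟨Xa, X1, hXm, hXa2, hX1⟩ := map_split Tree.mk _ _ _ hXsplit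
          obtain ⟨x0, rfl, hx0q⟩ := map_single_split hXa2
          have hx0sf : StarFreeTerm x0 :=
            starFree_arg hsf (mem_of_split_left hws (by rw [hXm]; simp))
          have hx0gt : Gt lt x0 a' := (IHstep x0 hx0sf).2 hx0q
          refine Gt.plainEq' X1 (x0 ::ₘ Ym) X1' (a' ::ₘ Zm) ?_ ?_ hX1 (by simp)
            (fun z hz => ?_)
          · rw [hws, hXm]
            simp only [← Multiset.singleton_add]
            ac_rfl
          · rw [hcons', hcancel, Multiset.add_cons]
          · rcases Multiset.mem_cons.mp hz with rfl | hz'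
            · exact ⟨x0, Multiset.mem_cons_self _ _, hx0gt⟩
            · exact ⟨pick z, Multiset.mem_cons_of_mem (hm z hz'), hg z hz'⟩
        · obtain ⟨Z0, rfl⟩ := Multiset.exists_cons_of_mem hZa
          have hcancel : (↑pre + ↑post : Multiset (Term (σ ⊕ σ) X)) = Xm' + Z0 := by
            have h0 : a ::ₘ (↑pre + ↑post : Multiset (Term (σ ⊕ σ) X))
                = a ::ₘ (Xm' + Z0) := by rw [hts, Multiset.add_cons]
            exact (Multiset.cons_inj_right _).mp h0
          have hy0 : pick a ∈ Ym := hm a (by simp)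
          have hy0sf : StarFreeTerm (pick a) :=
            starFree_arg hsf (mem_of_split_right hws hy0)
          have hy0gt : Gt lt (pick a) a' := (IHstep (pick a) hy0sf).1 (hg a (by simp))
          refine Gt.plainEq' Xm Ym Xm' (a' ::ₘ Z0) hws ?_ hX hY (fun z hz => ?_)
          · rw [hcons', hcancel, Multiset.add_cons]
          · rcases Multiset.mem_cons.mp hz with rfl | hz'
            · exact ⟨pick a, hy0, hy0gt⟩
            · exact ⟨pick z, hm z (Multiset.mem_cons_of_mem hz'),
                hg z (Multiset.mem_cons_of_mem hz')⟩
      | starEq Xm Ym Xm' Zm pick hws hts hX hm hg =>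
        rw [hcons] at hts
        have hamem : a ∈ Xm' + Zm := by rw [← hts]; simp
        rcases Multiset.mem_add.mp hamem with hXa | hZa
        · obtain ⟨X1', rfl⟩ := Multiset.exists_cons_of_mem hXa
          have hcancel : (↑pre + ↑post : Multiset (Term (σ ⊕ σ) X)) = X1' + Zm := by
            have h0 : a ::ₘ (↑pre + ↑post : Multiset (Term (σ ⊕ σ) X))
                = a ::ₘ (X1' + Zm) := by rw [hts, Multiset.cons_add]
            exact (Multiset.cons_inj_right _).mp h0
          have hXsplit : Xm.map Tree.mk
              = ({Tree.mk a} : Multiset _) + X1'.map Tree.mk := by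
            rw [hX]; simp [Multiset.singleton_add]
          obtain ⟨Xa, X1, hXm, hXa2, hX1⟩ := map_split Tree.mk _ _ _ hXsplit
          obtain ⟨x0, rfl, hx0q⟩ := map_single_split hXa2
          have hx0sf : StarFreeTerm x0 :=
            starFree_arg hsf (mem_of_split_left hws (by rw [hXm]; simp))
          have hx0gt : Gt lt x0 a' := (IHstep x0 hx0sf).2 hx0q
          refine Gt.starEq' X1 (x0 ::ₘ Ym) X1' (a' ::ₘ Zm) ?_ ?_ hX1 (fun z hz => ?_)
          · rw [hws, hXm]
            simp only [← Multiset.singleton_add]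
            ac_rfl
          · rw [hcons', hcancel, Multiset.add_cons]
          · rcases Multiset.mem_cons.mp hz with rfl | hz'
            · exact ⟨x0, Multiset.mem_cons_self _ _, hx0gt⟩
            · exact ⟨pick z, Multiset.mem_cons_of_mem (hm z hz'), hg z hz'⟩
        · obtain ⟨Z0, rfl⟩ := Multiset.exists_cons_of_mem hZa
          have hcancel : (↑pre + ↑post : Multiset (Term (σ ⊕ σ) X)) = Xm' + Z0 := by
            have h0 : a ::ₘ (↑pre + ↑post : Multiset (Term (σ ⊕ σ) X))
                = a ::ₘ (Xm' + Z0) := by rw [hts, Multiset.add_cons]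
            exact (Multiset.cons_inj_right _).mp h0
          have hy0 : pick a ∈ Ym := hm a (by simp)
          have hy0sf : StarFreeTerm (pick a) :=
            starFree_arg hsf (mem_of_split_right hws hy0)
          have hy0gt : Gt lt (pick a) a' := (IHstep (pick a) hy0sf).1 (hg a (by simp))
          refine Gt.starEq' Xm Ym Xm' (a' ::ₘ Z0) hws ?_ hX (fun z hz => ?_)
          · rw [hcons', hcancel, Multiset.add_cons]
          · rcases Multiset.mem_cons.mp hz with rfl | hz'
            · exact ⟨pick a, hy0, hy0gt⟩
            · exact ⟨pick z, hm z (Multiset.mem_cons_of_mem hz'),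
                hg z (Multiset.mem_cons_of_mem hz')⟩
    · intro heq
      cases w with
      | var x => exact absurd heq qvar_ne
      | app s0 ws =>
        obtain ⟨hs0, hmap⟩ := qapp_eq heq
        subst hs0
        obtain ⟨f0, rfl⟩ := starFree_head hsf
        have hmap' : (↑ws : Multiset (Term (σ ⊕ σ) X)).map Tree.mk
            = (↑pre : Multiset (Term (σ ⊕ σ) X)).map Tree.mk
              + (({Tree.mk a} : Multiset _) + (↑post : Multiset (Term (σ ⊕ σ) X)).map Tree.mk) := by
          rw [hmap, hcons, Multiset.map_cons, Multiset.map_add, Multiset.singleton_add,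
            Multiset.add_cons]
        obtain ⟨Wpre, rest, hwsplit, hWpre, hrest⟩ := map_split Tree.mk _ _ _ hmap'
        obtain ⟨Wa, Wpost, hrsplit, hWa, hWpost⟩ := map_split Tree.mk _ _ _ hrest
        obtain ⟨w_a, rfl, hwaq⟩ := map_single_split hWa
        have hwamem : w_a ∈ ws :=
          mem_of_split_right hwsplit (by rw [hrsplit]; simp)
        have hwasf : StarFreeTerm w_a := starFree_arg hsf hwamem
        have hgt' : Gt lt w_a a' := (IHstep w_a hwasf).2 hwaq
        refine Gt.plainEq' (Wpre + Wpost) {w_a} (↑pre + ↑post) {a'} ?_ ?_ ?_ (by simp)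
          (fun z hz => ?_)
        · rw [hwsplit, hrsplit]
          ac_rfl
        · rw [hcons']
          rw [← Multiset.singleton_add, add_comm]
        · rw [Multiset.map_add, hWpre, hWpost, Multiset.map_add]
        · rw [Multiset.mem_singleton.mp hz]
          exact ⟨w_a, by simp, hgt'⟩

end StarGames

namespace StarGames

/-- **Acyclicity on terms.**
Let `(Σ, <)` be a well-founded partial order.  There is no star-free term `t`
over `Σ` and term `u` with `t ▷⁺ u` and `u ≃ t` (the intermediate terms of the
`▷` reduction may contain marked symbols). -/
theorem term_acyclicity
    {σ X : Type} [Countable X] [Infinite X]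
    (lt : σ → σ → Prop) (hirr : Irreflexive lt) (htrans : Transitive lt)
    (hwf : WellFounded lt) :
    ¬ ∃ (t u : Term (σ ⊕ σ) X),
        StarFreeTerm t ∧ Relation.TransGen (StarStep lt) t u ∧ TermEquiv u t := by
  rintro ⟨t, u, hsf, hsteps, hequiv⟩
  have hGt : Gt lt t u := by
    clear hequiv
    induction hsteps with
    | single hstep => exact (gt_pres htrans hstep t hsf).2 rfl
    | tail _ hstep ih => exact (gt_pres htrans hstep t hsf).1 ih
  have hq : Tree.mk u = Tree.mk t := Quotient.sound hequiv
  exact gt_irrefl hirr htrans t (gt_congr_right hGt hq)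

end StarGames
end

section
/- Acyclicity on trees: let (Σ, <) be a well-founded partial order. For no star-free tree t over Σ do we have t ▷+ t. -/
namespace Ordinal

noncomputable def nadd (a b : Ordinal.{u}) : Ordinal.{u} :=
  max (⨆ x : Set.Iio a, Order.succ (nadd x.1 b)) (⨆ x : Set.Iio b, Order.succ (nadd a x.1))
termination_by (a, b)
decreasing_by
  · exact Prod.Lex.left _ _ x.2
  · exact Prod.Lex.right _ x.2

infixl:65 " ♯ " => Ordinal.nadd

theorem nadd_le_iff {a b c : Ordinal.{u}} :
    a ♯ b ≤ c ↔ (∀ a' < a, a' ♯ b < c) ∧ ∀ b' < b, a ♯ b' < c := by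
  rw [nadd, max_le_iff, Ordinal.iSup_le_iff, Ordinal.iSup_le_iff]
  simp only [Order.succ_le_iff, Subtype.forall, Set.mem_Iio]

theorem nadd_lt_nadd_right {b c : Ordinal.{u}} (h : b < c) (a : Ordinal.{u}) : b ♯ a < c ♯ a :=
  (nadd_le_iff.1 le_rfl).1 b h

theorem nadd_lt_nadd_left {b c : Ordinal.{u}} (h : b < c) (a : Ordinal.{u}) : a ♯ b < a ♯ c :=
  (nadd_le_iff.1 le_rfl).2 b h

theorem nadd_le_nadd_right {b c : Ordinal.{u}} (h : b ≤ c) (a : Ordinal.{u}) : b ♯ a ≤ c ♯ a :=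
  (StrictMono.monotone (fun _ _ h' => nadd_lt_nadd_right h' a)) h

theorem nadd_le_nadd_left {b c : Ordinal.{u}} (h : b ≤ c) (a : Ordinal.{u}) : a ♯ b ≤ a ♯ c :=
  (StrictMono.monotone (fun _ _ h' => nadd_lt_nadd_left h' a)) h

theorem nadd_le_nadd {a b c d : Ordinal.{u}} (h₁ : a ≤ b) (h₂ : c ≤ d) : a ♯ c ≤ b ♯ d :=
  (nadd_le_nadd_right h₁ c).trans (nadd_le_nadd_left h₂ b)

theorem nadd_comm (a b : Ordinal.{u}) : a ♯ b = b ♯ a := by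
  induction a using WellFoundedLT.induction generalizing b with
  | _ a IHa =>
  induction b using WellFoundedLT.induction with
  | _ b IHb =>
  apply le_antisymm
  · rw [nadd_le_iff]
    refine ⟨fun a' h => ?_, fun b' h => ?_⟩
    · rw [IHa a' h]; exact nadd_lt_nadd_left h b
    · rw [IHb b' h]; exact nadd_lt_nadd_right h a
  · rw [nadd_le_iff]
    refine ⟨fun b' h => ?_, fun a' h => ?_⟩
    · rw [← IHb b' h]; exact nadd_lt_nadd_left h a
    · rw [← IHa a' h]; exact nadd_lt_nadd_right h b

@[simp] theorem nadd_zero (a : Ordinal.{u}) : a ♯ 0 = a := by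
  induction a using WellFoundedLT.induction with
  | _ a IH =>
  apply le_antisymm
  · rw [nadd_le_iff]
    refine ⟨fun a' h => ?_, fun b' h => by simp at h⟩
    rw [IH a' h]; exact h
  · exact StrictMono.le_apply (f := fun x => x ♯ 0) (fun _ _ h => nadd_lt_nadd_right h 0)

@[simp] theorem zero_nadd (a : Ordinal.{u}) : 0 ♯ a = a := by
  rw [nadd_comm, nadd_zero]

theorem add_le_nadd (a b : Ordinal.{u}) : a + b ≤ a ♯ b := by
  induction b using WellFoundedLT.induction with
  | _ b IH =>
  by_contra hlt
  push_neg at hlt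
  have ha : a ≤ a ♯ b := by
    calc a = a ♯ 0 := (nadd_zero a).symm
    _ ≤ a ♯ b := nadd_le_nadd_left zero_le a
  have he := Ordinal.add_sub_cancel_of_le ha
  have hlt' : a ♯ b - a < b := by
    have : a + (a ♯ b - a) < a + b := by rw [he]; exact hlt
    exact (add_lt_add_iff_left a).1 this
  have := IH _ hlt'
  have h2 := nadd_lt_nadd_left hlt' a
  rw [he] at this
  exact absurd (this.trans_lt h2) (lt_irrefl _)

theorem lt_nadd_iff {a b c : Ordinal.{u}} :
    a < b ♯ c ↔ (∃ b' < b, a ≤ b' ♯ c) ∨ ∃ c' < c, a ≤ b ♯ c' := by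
  constructor
  · intro h
    by_contra hn
    push_neg at hn
    exact absurd (nadd_le_iff.2 ⟨hn.1, hn.2⟩) (not_le.2 h)
  · rintro (⟨b', hb, h⟩ | ⟨c', hc, h⟩)
    · exact h.trans_lt (nadd_lt_nadd_right hb c)
    · exact h.trans_lt (nadd_lt_nadd_left hc b)

theorem nadd_assoc (a b c : Ordinal.{u}) : a ♯ b ♯ c = a ♯ (b ♯ c) := by
  induction a using WellFoundedLT.induction generalizing b c with
  | _ a IHa =>
  induction b using WellFoundedLT.induction generalizing c with
  | _ b IHb =>
  induction c using WellFoundedLT.induction with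
  | _ c IHc =>
  apply le_antisymm
  · rw [nadd_le_iff]
    refine ⟨fun d hd => ?_, fun c' hc => ?_⟩
    · rcases lt_nadd_iff.1 hd with ⟨a', ha, hd'⟩ | ⟨b', hb, hd'⟩
      · calc d ♯ c ≤ a' ♯ b ♯ c := nadd_le_nadd_right hd' c
        _ = a' ♯ (b ♯ c) := IHa a' ha b c
        _ < a ♯ (b ♯ c) := nadd_lt_nadd_right ha _
      · calc d ♯ c ≤ a ♯ b' ♯ c := nadd_le_nadd_right hd' c
        _ = a ♯ (b' ♯ c) := IHb b' hb c
        _ < a ♯ (b ♯ c) := nadd_lt_nadd_left (nadd_lt_nadd_right hb c) a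
    · rw [IHc c' hc]
      exact nadd_lt_nadd_left (nadd_lt_nadd_left hc b) a
  · rw [nadd_le_iff]
    refine ⟨fun a' ha => ?_, fun d hd => ?_⟩
    · rw [← IHa a' ha b c]
      exact nadd_lt_nadd_right (nadd_lt_nadd_right ha b) c
    · rcases lt_nadd_iff.1 hd with ⟨b', hb, hd'⟩ | ⟨c', hc, hd'⟩
      · calc a ♯ d ≤ a ♯ (b' ♯ c) := nadd_le_nadd_left hd' a
        _ = a ♯ b' ♯ c := (IHb b' hb c).symm
        _ < a ♯ b ♯ c := nadd_lt_nadd_right (nadd_lt_nadd_left hb a) c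
      · calc a ♯ d ≤ a ♯ (b ♯ c') := nadd_le_nadd_left hd' a
        _ = a ♯ b ♯ c' := (IHc c' hc).symm
        _ < a ♯ b ♯ c := nadd_lt_nadd_left hc _

end Ordinal

open Ordinal Order

namespace StarOrd

/-- CNF-style bound for natural addition, assuming nadd-principality at exponent `d`. -/
theorem cnf_nadd_le {d : Ordinal} (HP : ∀ r s, r < ω ^ d → s < ω ^ d → r ♯ s < ω ^ d) :
    ∀ (x y : Ordinal) (m n : ℕ) (r s : Ordinal), r < ω ^ d → s < ω ^ d →
      x = ω ^ d * m + r → y = ω ^ d * n + s →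
      x ♯ y ≤ ω ^ d * (m + n : ℕ) + (r ♯ s) := by
  have hd0 : (ω ^ d) ≠ 0 := opow_ne_zero d omega0_ne_zero
  have hco : ∀ p : ℕ, ω ^ d * (p : Ordinal) + ω ^ d = ω ^ d * ((p + 1 : ℕ) : Ordinal) := by
    intro p; push_cast; rw [mul_add, mul_one]
  intro x
  induction x using WellFoundedLT.induction with
  | _ x IHx =>
  intro y
  induction y using WellFoundedLT.induction with
  | _ y IHy =>
  intro m n r s hr hs hx hy
  have key : ∀ (x' : Ordinal) (m : ℕ) (r : Ordinal), r < ω ^ d → x' < ω ^ d * m + r →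
      (∃ (k : ℕ) (r' : Ordinal), r' < ω ^ d ∧ x' = ω ^ d * k + r' ∧
        (k < m ∨ (k = m ∧ r' < r))) := by
    intro x' m r hr hx'
    have hdiv : ω ^ d * (x' / ω ^ d) + x' % ω ^ d = x' := Ordinal.div_add_mod _ _
    have hmod : x' % ω ^ d < ω ^ d := Ordinal.mod_lt _ hd0
    have hlt' : x' / ω ^ d < ((m + 1 : ℕ) : Ordinal) := by
      rw [Ordinal.div_lt hd0]
      calc x' < ω ^ d * m + r := hx'
      _ < ω ^ d * m + ω ^ d := add_lt_add_right hr _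
      _ = ω ^ d * ((m + 1 : ℕ) : Ordinal) := hco m
    have hnat : x' / ω ^ d < ω := lt_of_lt_of_le hlt' (Ordinal.nat_lt_omega0 _).le
    obtain ⟨k, hk⟩ := Ordinal.lt_omega0.1 hnat
    have hkm : k < m + 1 := by
      rw [hk] at hlt'; exact_mod_cast hlt'
    have hxeq : x' = ω ^ d * (k : Ordinal) + x' % ω ^ d := by rw [← hk, hdiv]
    refine ⟨k, x' % ω ^ d, hmod, hxeq, ?_⟩
    rcases Nat.lt_succ_iff_lt_or_eq.1 hkm with h | h
    · exact Or.inl h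
    · refine Or.inr ⟨h, ?_⟩
      subst h
      rw [hxeq] at hx'
      exact (add_lt_add_iff_left _).1 hx'
  apply Ordinal.nadd_le_iff.2
  constructor
  · intro x' hx'
    rw [hx] at hx'
    obtain ⟨k, r', hr', hx'eq, hcase⟩ := key x' m r hr hx'
    have hIH := IHx x' (by rw [hx]; exact hx') y k n r' s hr' hs hx'eq hy
    rcases hcase with h | ⟨hkm, hrr⟩
    · calc x' ♯ y ≤ ω ^ d * (k + n : ℕ) + (r' ♯ s) := hIH
      _ < ω ^ d * (k + n : ℕ) + ω ^ d := add_lt_add_right (HP _ _ hr' hs) _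
      _ = ω ^ d * ((k + n + 1 : ℕ) : Ordinal) := hco (k + n)
      _ ≤ ω ^ d * ((m + n : ℕ) : Ordinal) := by
          apply mul_le_mul_right
          exact_mod_cast Nat.succ_le_of_lt (Nat.add_lt_add_right h n)
      _ ≤ ω ^ d * (m + n : ℕ) + (r ♯ s) := le_self_add
    · subst hkm
      calc x' ♯ y ≤ ω ^ d * (k + n : ℕ) + (r' ♯ s) := hIH
      _ < ω ^ d * (k + n : ℕ) + (r ♯ s) :=
          add_lt_add_right (Ordinal.nadd_lt_nadd_right hrr _) _
  · intro y' hy'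
    rw [hy] at hy'
    obtain ⟨k, s', hs', hy'eq, hcase⟩ := key y' n s hs hy'
    have hIH := IHy y' (by rw [hy]; exact hy') m k r s' hr hs' hx hy'eq
    rcases hcase with h | ⟨hkm, hss⟩
    · calc x ♯ y' ≤ ω ^ d * (m + k : ℕ) + (r ♯ s') := hIH
      _ < ω ^ d * (m + k : ℕ) + ω ^ d := add_lt_add_right (HP _ _ hr hs') _
      _ = ω ^ d * ((m + k + 1 : ℕ) : Ordinal) := hco (m + k)
      _ ≤ ω ^ d * ((m + n : ℕ) : Ordinal) := by
          apply mul_le_mul_right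
          exact_mod_cast Nat.succ_le_of_lt (Nat.add_lt_add_left h m)
      _ ≤ ω ^ d * (m + n : ℕ) + (r ♯ s) := le_self_add
    · subst hkm
      calc x ♯ y' ≤ ω ^ d * (m + k : ℕ) + (r ♯ s') := hIH
      _ < ω ^ d * (m + k : ℕ) + (r ♯ s) :=
          add_lt_add_right (Ordinal.nadd_lt_nadd_left hss _) _

/-- `ω ^ c` is closed under natural addition. -/
theorem nadd_lt_opow {a b c : Ordinal} (ha : a < ω ^ c) (hb : b < ω ^ c) :
    a ♯ b < ω ^ c := by
  induction c using WellFoundedLT.induction generalizing a b with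
  | _ c IH =>
  rcases Ordinal.zero_or_succ_or_isSuccLimit c with rfl | ⟨d, rfl⟩ | hc
  · rw [opow_zero] at *
    rw [Ordinal.lt_one_iff_zero] at ha hb
    subst ha; subst hb
    simpa using (zero_lt_one : (0:Ordinal) < 1)
  · have HP : ∀ r s, r < ω ^ d → s < ω ^ d → r ♯ s < ω ^ d := fun r s hr hs =>
      IH d (lt_succ d) hr hs
    have hd0 : (ω ^ d) ≠ 0 := opow_ne_zero d omega0_ne_zero
    have hco : ∀ p : ℕ, ω ^ d * (p : Ordinal) + ω ^ d = ω ^ d * ((p + 1 : ℕ) : Ordinal) := by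
      intro p; push_cast; rw [mul_add, mul_one]
    have hsucc : (ω : Ordinal) ^ succ d = ω ^ d * ω := opow_succ ω d
    have hdec : ∀ z : Ordinal, z < ω ^ succ d →
        ∃ (m : ℕ) (r : Ordinal), r < ω ^ d ∧ z = ω ^ d * m + r := by
      intro z hz
      have h1 : z / ω ^ d < ω := by
        rw [Ordinal.div_lt hd0, ← hsucc]; exact hz
      obtain ⟨m, hm⟩ := Ordinal.lt_omega0.1 h1
      exact ⟨m, z % ω ^ d, Ordinal.mod_lt _ hd0,
        by rw [← hm, Ordinal.div_add_mod]⟩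
    obtain ⟨m, r, hr, hra⟩ := hdec a ha
    obtain ⟨n, s, hs, hsb⟩ := hdec b hb
    calc a ♯ b ≤ ω ^ d * (m + n : ℕ) + (r ♯ s) := cnf_nadd_le HP a b m n r s hr hs hra hsb
    _ < ω ^ d * (m + n : ℕ) + ω ^ d := add_lt_add_right (HP _ _ hr hs) _
    _ = ω ^ d * ((m + n + 1 : ℕ) : Ordinal) := hco (m + n)
    _ < ω ^ d * ω := by
        apply mul_lt_mul_of_pos_left (Ordinal.nat_lt_omega0 _)
        exact Ordinal.opow_pos d omega0_pos
    _ = ω ^ succ d := hsucc.symm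
  · obtain ⟨ca, hca, hca'⟩ := (lt_opow_of_isSuccLimit omega0_ne_zero hc).1 ha
    obtain ⟨cb, hcb, hcb'⟩ := (lt_opow_of_isSuccLimit omega0_ne_zero hc).1 hb
    have h1 : a < ω ^ max ca cb :=
      lt_of_lt_of_le hca' (opow_le_opow_right omega0_pos (le_max_left _ _))
    have h2 : b < ω ^ max ca cb :=
      lt_of_lt_of_le hcb' (opow_le_opow_right omega0_pos (le_max_right _ _))
    exact lt_of_lt_of_le (IH _ (max_lt hca hcb) h1 h2)
      (opow_le_opow_right omega0_pos (max_lt hca hcb).le)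



section Phi

variable {σ : Type} {lt : σ → σ → Prop} (hwf : WellFounded lt)

/-- A Veblen-style hierarchy indexed by a well-founded precedence. -/
noncomputable def phi : σ → Ordinal → Ordinal :=
  hwf.fix fun f rec =>
    derivFamily (fun i : Option {g // lt g f} =>
      match i with
      | none => (ω ^ ·)
      | some g => rec g.1 g.2)

theorem phi_eq (f : σ) : phi hwf f =
    derivFamily (fun i : Option {g // lt g f} =>
      match i with
      | none => (ω ^ ·)
      | some g => phi hwf g.1) := by
  rw [phi, WellFounded.fix_eq]

theorem isNormal_phi (f : σ) : IsNormal (phi hwf f) := by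
  rw [phi_eq]
  exact isNormal_derivFamily _

theorem phi_omega_opow_fp (f : σ) (x : Ordinal) :
    ω ^ (phi hwf f x) = phi hwf f x := by
  conv_lhs => rw [phi_eq]
  conv_rhs => rw [phi_eq]
  exact derivFamily_fp (i := (none : Option {g // lt g f}))
    (isNormal_opow one_lt_omega0) x

theorem phi_phi_fp {g f : σ} (h : lt g f) (x : Ordinal) :
    phi hwf g (phi hwf f x) = phi hwf f x := by
  conv_lhs => rw [phi_eq hwf f]
  conv_rhs => rw [phi_eq hwf f]
  exact derivFamily_fp (i := (some ⟨g, h⟩ : Option {g // lt g f}))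
    (isNormal_phi hwf g) x

theorem phi_le_self (f : σ) (x : Ordinal) : x ≤ phi hwf f x :=
  (isNormal_phi hwf f).strictMono.le_apply

theorem phi_strictMono (f : σ) : StrictMono (phi hwf f) :=
  (isNormal_phi hwf f).strictMono

/-- anything below a `phi` value is absorbed by natural addition. -/
theorem nadd_lt_phi {f : σ} {a b x : Ordinal}
    (ha : a < phi hwf f x) (hb : b < phi hwf f x) : a ♯ b < phi hwf f x := by
  rw [← phi_omega_opow_fp hwf f x] at *
  exact nadd_lt_opow ha hb

theorem opow_lt_phi {f : σ} {a x : Ordinal} (ha : a < phi hwf f x) :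
    ω ^ a < phi hwf f x := by
  conv_rhs => rw [← phi_omega_opow_fp hwf f x]
  rw [opow_lt_opow_iff_right one_lt_omega0]
  exact ha

theorem one_lt_phi (f : σ) (x : Ordinal) : 1 < phi hwf f x := by
  have h0 : (0:Ordinal) < phi hwf f x := by
    rcases eq_or_lt_of_le (zero_le (a := phi hwf f x)) with h | h
    · exfalso
      have h2 := phi_omega_opow_fp hwf f x
      rw [← h, opow_zero] at h2
      exact one_ne_zero h2
    · exact h
  have := opow_lt_phi hwf (f := f) (x := x) h0
  rwa [opow_zero] at this

theorem succ_lt_phi {f : σ} {a x : Ordinal} (ha : a < phi hwf f x) :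
    a + 1 < phi hwf f x := by
  have h1 : (1:Ordinal) < phi hwf f x := one_lt_phi hwf f x
  have := nadd_lt_phi hwf ha h1
  calc a + 1 ≤ a ♯ 1 := Ordinal.add_le_nadd a 1
  _ < phi hwf f x := this

theorem phi_lt_phi_of_prec {g f : σ} (h : lt g f) {a x : Ordinal}
    (ha : a < phi hwf f x) : phi hwf g a < phi hwf f x := by
  conv_rhs => rw [← phi_phi_fp hwf h x]
  exact phi_strictMono hwf g ha

end Phi

/-! ### Natural sums of lists -/

/-- natural sum of a list of ordinals. -/
noncomputable def lsum : List Ordinal → Ordinal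
  | [] => 0
  | a :: l => a ♯ lsum l

theorem lsum_perm : ∀ {l l' : List Ordinal}, l.Perm l' → lsum l = lsum l' := by
  intro l l' h
  induction h with
  | nil => rfl
  | cons a _ ih => simp [lsum, ih]
  | swap a b l => simp [lsum, ← Ordinal.nadd_assoc, Ordinal.nadd_comm a b]
  | trans _ _ ih1 ih2 => rw [ih1, ih2]

theorem le_lsum {a : Ordinal} : ∀ {l : List Ordinal}, a ∈ l → a ≤ lsum l := by
  intro l
  induction l with
  | nil => intro h; cases h
  | cons b l ih =>
    intro h
    rcases List.mem_cons.1 h with rfl | h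
    · calc a = a ♯ 0 := (Ordinal.nadd_zero a).symm
      _ ≤ a ♯ lsum l := Ordinal.nadd_le_nadd_left zero_le a
    · calc a ≤ lsum l := ih h
      _ = 0 ♯ lsum l := (Ordinal.zero_nadd _).symm
      _ ≤ b ♯ lsum l := Ordinal.nadd_le_nadd_right zero_le _

theorem lsum_append (l r : List Ordinal) : lsum (l ++ r) = lsum l ♯ lsum r := by
  induction l with
  | nil => simp [lsum]
  | cons a l ih => simp [lsum, ih, Ordinal.nadd_assoc]

theorem lsum_lt_opow {c : Ordinal} : ∀ {l : List Ordinal},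
    (∀ x ∈ l, x < ω ^ c) → lsum l < ω ^ c := by
  intro l
  induction l with
  | nil => intro _; exact opow_pos c omega0_pos
  | cons a l ih =>
    intro h
    exact nadd_lt_opow (h a (List.mem_cons_self)) (ih fun x hx => h x (List.mem_cons_of_mem _ hx))

theorem lsum_le_of_forall₂ : ∀ {l l' : List Ordinal}, List.Forall₂ (· ≤ ·) l l' →
    lsum l ≤ lsum l' := by
  intro l l' h
  induction h with
  | nil => exact le_refl _
  | cons hab _ ih => exact Ordinal.nadd_le_nadd hab ih

theorem lsum_lt_of_forall₂ {l₁ l₂ : List Ordinal} {a b : Ordinal}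
    (hab : a < b) (h₁ : List.Forall₂ (· ≤ ·) l₁ l₂) :
    lsum (a :: l₁) < lsum (b :: l₂) := by
  show a ♯ lsum l₁ < b ♯ lsum l₂
  calc a ♯ lsum l₁ < b ♯ lsum l₁ := Ordinal.nadd_lt_nadd_right hab _
  _ ≤ b ♯ lsum l₂ := Ordinal.nadd_le_nadd_left (lsum_le_of_forall₂ h₁) b


end StarOrd

namespace StarGames

variable {σ X : Type}

/-- head-bit used in the termination measure: unmarked app counts 1. -/
def mub : Term (σ ⊕ σ) X → ℕ
  | .app (.inl _) _ => 1
  | _ => 0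

theorem mub_le_one (t : Term (σ ⊕ σ) X) : mub t ≤ 1 := by
  cases t with
  | var _ => simp [mub]
  | app h ts => cases h <;> simp [mub]

/-- termination measure on marked terms. -/
noncomputable def mu (t : Term (σ ⊕ σ) X) : ℕ := 2 * sizeOf t + mub t

theorem sizeOf_inl_inr (f : σ) :
    sizeOf (Sum.inl f : σ ⊕ σ) = sizeOf (Sum.inr f : σ ⊕ σ)  := by simp

theorem mu_mem_lt {s : Term (σ ⊕ σ) X} {ts : List (Term (σ ⊕ σ) X)} (h : s ∈ ts)
    (g : σ ⊕ σ) : mu s < mu (Term.app g ts) := by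
  have h1 := List.sizeOf_lt_of_mem h
  have h2 := mub_le_one s
  simp only [mu, Term.app.sizeOf_spec]
  omega

variable (lt : σ → σ → Prop)

/-- The "values" relation: `Val u t` means the plain term `u` is dominated by the
marked term `t`, where marked heads dominate strictly. -/
def Val : Term σ X → Term (σ ⊕ σ) X → Prop
  | u, .var x => u = .var x
  | u, .app (.inl f) ts =>
      (∃ us : {l : List (Term σ X) // u = .app f l},
       ∃ ts' : {l : List (Term (σ ⊕ σ) X) // ts.Perm l ∧ us.1.length = l.length},
         ∀ p ∈ us.1.zip ts'.1, Val p.1 p.2) ∨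
      Val u (.app (.inr f) ts)
  | u, .app (.inr f) ts =>
      (∃ t' : {s // s ∈ ts}, Val u t'.1) ∨
      (∃ gus : {p : σ × List (Term σ X) // u = .app p.1 p.2 ∧ lt p.1 f},
         ∀ v ∈ gus.1.2, Val v (.app (.inr f) ts)) ∨
      (∃ us : {l : List (Term σ X) // u = .app f l},
       ∃ md : {p : List (Term (σ ⊕ σ) X) × List (Term (σ ⊕ σ) X) //
                 ts.Perm (p.1 ++ p.2) ∧ p.2 ≠ []},
       ∃ vw : {p : List (Term σ X) × List (Term σ X) //
                 us.1.Perm (p.1 ++ p.2) ∧ p.1.length = md.1.1.length},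
         (∀ p ∈ vw.1.1.zip md.1.1, Val p.1 p.2) ∧
         (∀ w ∈ vw.1.2, ∃ q : {q : σ × List (Term (σ ⊕ σ) X) //
             Term.app (Sum.inl q.1) q.2 ∈ md.1.2 ∨ Term.app (Sum.inr q.1) q.2 ∈ md.1.2},
             Val w (.app (.inr q.1.1) q.1.2)))
  termination_by u t => (mu t, sizeOf u)
  decreasing_by
  · -- eq pointwise
    apply Prod.Lex.left
    have hm : p.2 ∈ ts'.1 := (List.of_mem_zip ‹p ∈ _›).2
    exact mu_mem_lt (ts'.2.1.mem_iff.2 hm) _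
  · -- wk
    apply Prod.Lex.left
    simp only [mu, mub, Term.app.sizeOf_spec, Sum.inl.sizeOf_spec, Sum.inr.sizeOf_spec]
    omega
  · -- sub
    apply Prod.Lex.left
    exact mu_mem_lt t'.2 _
  · -- drop
    apply Prod.Lex.right
    rcases gus with ⟨⟨g, us⟩, h1, h2⟩
    have hm : v ∈ us := ‹v ∈ _›
    subst h1
    have := List.sizeOf_lt_of_mem hm
    simp only [Term.app.sizeOf_spec]
    omega
  · -- mul pointwise
    apply Prod.Lex.left
    have hm : p.2 ∈ md.1.1 := (List.of_mem_zip ‹p ∈ _›).2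
    exact mu_mem_lt (md.2.1.mem_iff.2 (List.mem_append_left _ hm)) _
  · -- mul dominated
    apply Prod.Lex.left
    rcases q.2 with hq | hq
    · have hm : Term.app (Sum.inl q.1.1) q.1.2 ∈ ts :=
        md.2.1.mem_iff.2 (List.mem_append_right _ hq)
      have h1 := List.sizeOf_lt_of_mem hm
      simp only [mu, mub, Term.app.sizeOf_spec, Sum.inl.sizeOf_spec,
        Sum.inr.sizeOf_spec] at *
      omega
    · have hm : Term.app (Sum.inr q.1.1) q.1.2 ∈ ts :=
        md.2.1.mem_iff.2 (List.mem_append_right _ hq)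
      have h1 := List.sizeOf_lt_of_mem hm
      simp only [mu, mub, Term.app.sizeOf_spec, Sum.inl.sizeOf_spec,
        Sum.inr.sizeOf_spec] at *
      omega

end StarGames

namespace StarGames

variable {σ X : Type} {lt : σ → σ → Prop}

theorem val_var_iff {u : Term σ X} {x : X} : Val lt u (.var x) ↔ u = .var x := by
  rw [Val]

theorem val_inl_iff {u : Term σ X} {f : σ} {ts : List (Term (σ ⊕ σ) X)} :
    Val lt u (.app (.inl f) ts) ↔
    (∃ us ts', u = .app f us ∧ ts.Perm ts' ∧ List.Forall₂ (Val lt) us ts') ∨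
      Val lt u (.app (.inr f) ts) := by
  rw [Val]
  constructor
  · rintro (⟨⟨us, hu⟩, ⟨ts', hp, hl⟩, hall⟩ | h)
    · exact Or.inl ⟨us, ts', hu, hp, List.forall₂_iff_zip.2 ⟨hl, fun h => hall _ h⟩⟩
    · exact Or.inr h
  · rintro (⟨us, ts', hu, hp, hall⟩ | h)
    · obtain ⟨hl, hz⟩ := List.forall₂_iff_zip.1 hall
      exact Or.inl ⟨⟨us, hu⟩, ⟨ts', hp, hl⟩, fun p hp' => hz hp'⟩
    · exact Or.inr h

theorem val_inr_iff {u : Term σ X} {f : σ} {ts : List (Term (σ ⊕ σ) X)} :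
    Val lt u (.app (.inr f) ts) ↔
    (∃ t' ∈ ts, Val lt u t') ∨
    (∃ g us, u = .app g us ∧ lt g f ∧ ∀ v ∈ us, Val lt v (.app (.inr f) ts)) ∨
    (∃ us M D V W, u = .app f us ∧ ts.Perm (M ++ D) ∧ D ≠ [] ∧ us.Perm (V ++ W) ∧
       List.Forall₂ (Val lt) V M ∧
       ∀ w ∈ W, ∃ g ys, (Term.app (Sum.inl g) ys ∈ D ∨ Term.app (Sum.inr g) ys ∈ D) ∧
         Val lt w (.app (.inr g) ys)) := by
  rw [Val]
  constructor
  · rintro (⟨⟨t', ht⟩, hv⟩ | ⟨⟨⟨g, us⟩, hu, hlt⟩, hall⟩ |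
      ⟨⟨us, hu⟩, ⟨⟨M, D⟩, hp, hD⟩, ⟨⟨V, W⟩, hq, hl⟩, hPW, hDom⟩)
    · exact Or.inl ⟨t', ht, hv⟩
    · exact Or.inr (Or.inl ⟨g, us, hu, hlt, hall⟩)
    · refine Or.inr (Or.inr ⟨us, M, D, V, W, hu, hp, hD, hq,
        List.forall₂_iff_zip.2 ⟨hl, fun h => hPW _ h⟩, fun w hw => ?_⟩)
      obtain ⟨⟨⟨g, ys⟩, hmem⟩, hv⟩ := hDom w hw
      exact ⟨g, ys, hmem, hv⟩
  · rintro (⟨t', ht, hv⟩ | ⟨g, us, hu, hlt, hall⟩ |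
      ⟨us, M, D, V, W, hu, hp, hD, hq, hPW, hDom⟩)
    · exact Or.inl ⟨⟨t', ht⟩, hv⟩
    · exact Or.inr (Or.inl ⟨⟨⟨g, us⟩, hu, hlt⟩, hall⟩)
    · obtain ⟨hl, hz⟩ := List.forall₂_iff_zip.1 hPW
      refine Or.inr (Or.inr ⟨⟨us, hu⟩, ⟨⟨M, D⟩, hp, hD⟩, ⟨⟨V, W⟩, hq, hl⟩,
        fun p hp' => hz hp', fun w hw => ?_⟩)
      obtain ⟨g, ys, hmem, hv⟩ := hDom w hw
      exact ⟨⟨⟨g, ys⟩, hmem⟩, hv⟩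

/-- intro rules -/
theorem Val.var' (x : X) : Val lt (Term.var x) (Term.var x : Term (σ ⊕ σ) X) :=
  val_var_iff.2 rfl

theorem Val.eq' {us ts ts'} {f : σ} (hp : List.Perm ts ts')
    (h : List.Forall₂ (Val lt) us ts') :
    Val lt (Term.app f us) (Term.app (Sum.inl f) ts : Term (σ ⊕ σ) X) :=
  val_inl_iff.2 (Or.inl ⟨us, ts', rfl, hp, h⟩)

theorem Val.wk {u} {f : σ} {ts} (h : Val lt u (Term.app (Sum.inr f) ts)) :
    Val lt u (Term.app (Sum.inl f) ts : Term (σ ⊕ σ) X) :=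
  val_inl_iff.2 (Or.inr h)

theorem Val.sub {u t'} {f : σ} {ts} (ht : t' ∈ ts) (h : Val lt u t') :
    Val lt u (Term.app (Sum.inr f) ts : Term (σ ⊕ σ) X) :=
  val_inr_iff.2 (Or.inl ⟨t', ht, h⟩)

theorem Val.drop {g f : σ} {us ts} (hgf : lt g f)
    (h : ∀ v ∈ us, Val lt v (Term.app (Sum.inr f) ts : Term (σ ⊕ σ) X)) :
    Val lt (Term.app g us) (Term.app (Sum.inr f) ts : Term (σ ⊕ σ) X) :=
  val_inr_iff.2 (Or.inr (Or.inl ⟨g, us, rfl, hgf, h⟩))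

theorem Val.mul {f : σ} {us ts M D V W} (hp : List.Perm ts (M ++ D)) (hD : D ≠ [])
    (hq : List.Perm us (V ++ W)) (hPW : List.Forall₂ (Val lt) V M)
    (hDom : ∀ w ∈ W, ∃ g ys,
      (Term.app (Sum.inl g) ys ∈ D ∨ Term.app (Sum.inr g) ys ∈ D) ∧
      Val lt w (Term.app (Sum.inr g) ys)) :
    Val lt (Term.app f us) (Term.app (Sum.inr f) ts : Term (σ ⊕ σ) X) :=
  val_inr_iff.2 (Or.inr (Or.inr ⟨us, M, D, V, W, rfl, hp, hD, hq, hPW, hDom⟩))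

end StarGames

namespace StarGames

variable {σ X : Type} {lt : σ → σ → Prop}

/-! ### list helpers -/

theorem perm_replace {α} {pre post l₁ l₂ : List α} {x y : α}
    (h : (pre ++ y :: post).Perm (l₁ ++ y :: l₂)) :
    (pre ++ x :: post).Perm (l₁ ++ x :: l₂) := by
  have h1 : (y :: (pre ++ post)).Perm (y :: (l₁ ++ l₂)) :=
    (List.perm_middle.symm.trans h).trans List.perm_middle
  have h2 := h1.cons_inv
  exact List.perm_middle.trans ((h2.cons x).trans List.perm_middle.symm)

theorem forall₂_append_build {α β} {R : α → β → Prop} :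
    ∀ {a₁ a₂ : List α} {l₁ l₂ : List β}, List.Forall₂ R a₁ l₁ → List.Forall₂ R a₂ l₂ →
      List.Forall₂ R (a₁ ++ a₂) (l₁ ++ l₂) := by
  intro a₁ a₂ l₁ l₂ h1 h2
  induction h1 with
  | nil => exact h2
  | cons hab _ ih => exact List.Forall₂.cons hab ih

theorem forall₂_split {α β} {R : α → β → Prop} :
    ∀ {l₁ : List β} {us : List α} {y : β} {l₂ : List β},
      List.Forall₂ R us (l₁ ++ y :: l₂) →
      ∃ a₁ v a₂, us = a₁ ++ v :: a₂ ∧ List.Forall₂ R a₁ l₁ ∧ R v y ∧ List.Forall₂ R a₂ l₂ := by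
  intro l₁
  induction l₁ with
  | nil =>
    intro us y l₂ h
    rcases List.forall₂_cons_right_iff.1 h with ⟨v, a₂, hv, h₂, rfl⟩
    exact ⟨[], v, a₂, rfl, List.Forall₂.nil, hv, h₂⟩
  | cons b l₁ ih =>
    intro us y l₂ h
    rcases List.forall₂_cons_right_iff.1 h with ⟨v0, us', hv0, h', rfl⟩
    obtain ⟨a₁, v, a₂, rfl, ha₁, hv, ha₂⟩ := ih h'
    exact ⟨v0 :: a₁, v, a₂, rfl, List.Forall₂.cons hv0 ha₁, hv, ha₂⟩

theorem mem_of_replace {α} {l₁ l₂ : List α} {x y z : α}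
    (hz : z ∈ l₁ ++ y :: l₂) (hne : z ≠ y) : z ∈ l₁ ++ x :: l₂ := by
  rcases List.mem_append.1 hz with h | h
  · exact List.mem_append_left _ h
  · rcases List.mem_cons.1 h with rfl | h
    · exact absurd rfl hne
    · exact List.mem_append_right _ (List.mem_cons_of_mem _ h)

/-! ### marking the top symbol -/

def markTop : Term (σ ⊕ σ) X → Term (σ ⊕ σ) X
  | .app (.inl f) ts => .app (.inr f) ts
  | t => t

@[simp] theorem markTop_inl {f : σ} {ts : List (Term (σ ⊕ σ) X)} :
    markTop (Term.app (Sum.inl f) ts) = Term.app (Sum.inr f) ts := rfl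

@[simp] theorem markTop_inr {f : σ} {ts : List (Term (σ ⊕ σ) X)} :
    markTop (Term.app (Sum.inr f) ts) = Term.app (Sum.inr f) ts := rfl

@[simp] theorem markTop_var {x : X} :
    markTop (Term.var x : Term (σ ⊕ σ) X) = Term.var x := rfl

/-- replacing one argument by a dominating one, inside any application. -/
theorem val_congr {x y : Term (σ ⊕ σ) X}
    (hx : ∃ xh xargs, x = Term.app xh xargs)
    (h1 : ∀ u, Val lt u y → Val lt u x)
    (h2 : ∀ u, Val lt u (markTop y) → Val lt u (markTop x)) :
    ∀ (n : ℕ) (u : Term σ X) (h : σ ⊕ σ) (pre post : List (Term (σ ⊕ σ) X)),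
      mu (Term.app h (pre ++ y :: post)) + sizeOf u ≤ n →
      Val lt u (Term.app h (pre ++ y :: post)) →
      Val lt u (Term.app h (pre ++ x :: post)) := by
  intro n
  induction n using Nat.strong_induction_on with
  | _ n IH =>
  intro u h pre post hn hval
  rcases h with f | f
  · -- unmarked head
    rcases val_inl_iff.1 hval with ⟨us, ts', hu, hp, hPW⟩ | hw
    · -- eq clause
      subst hu
      have hy : y ∈ ts' := hp.mem_iff.1 (by simp)
      obtain ⟨l₁, l₂, rfl⟩ := List.append_of_mem hy
      obtain ⟨a₁, v, a₂, rfl, ha₁, hv, ha₂⟩ := forall₂_split hPW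
      exact Val.eq' (perm_replace hp)
        (forall₂_append_build ha₁ (List.Forall₂.cons (h1 v hv) ha₂))
    · -- wk clause
      refine Val.wk (IH (n-1) ?_ u (Sum.inr f) pre post ?_ hw)
      · have := mub_le_one (Term.app (Sum.inl f) (pre ++ y :: post) : Term (σ ⊕ σ) X)
        simp only [mu, mub, Term.app.sizeOf_spec, Sum.inl.sizeOf_spec, Sum.inr.sizeOf_spec] at *
        omega
      · simp only [mu, mub, Term.app.sizeOf_spec, Sum.inl.sizeOf_spec, Sum.inr.sizeOf_spec] at *
        omega
  · -- marked head
    rcases val_inr_iff.1 hval with ⟨t', ht, hv⟩ | ⟨g, us, hu, hlt, hall⟩ |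
      ⟨us, M, D, V, W, hu, hp, hD, hq, hPW, hDom⟩
    · -- sub clause
      by_cases hty : t' = y
      · subst hty
        exact Val.sub (by simp) (h1 u hv)
      · exact Val.sub (mem_of_replace ht hty) hv
    · -- drop clause
      subst hu
      refine Val.drop hlt fun v hvmem => ?_
      have hs : sizeOf v < sizeOf (Term.app g us) := by
        have := List.sizeOf_lt_of_mem hvmem
        simp only [Term.app.sizeOf_spec]; omega
      exact IH (n-1) (by omega) v (Sum.inr f) pre post (by omega) (hall v hvmem)
    · -- mul clause
      subst hu
      obtain ⟨xh, xargs, rfl⟩ := hx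
      have hy : y ∈ M ++ D := hp.mem_iff.1 (by simp)
      rcases List.mem_append.1 hy with hyM | hyD
      · -- y is a matched element
        obtain ⟨m₁, m₂, rfl⟩ := List.append_of_mem hyM
        obtain ⟨a₁, v, a₂, rfl, ha₁, hv, ha₂⟩ := forall₂_split hPW
        have hp' : (pre ++ Term.app xh xargs :: post).Perm ((m₁ ++ Term.app xh xargs :: m₂) ++ D) := by
          have : (pre ++ y :: post).Perm (m₁ ++ y :: (m₂ ++ D)) := by
            simpa [List.append_assoc] using hp
          simpa [List.append_assoc] using perm_replace (x := Term.app xh xargs) this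
        refine Val.mul hp' hD hq
          (forall₂_append_build ha₁ (List.Forall₂.cons (h1 v hv) ha₂)) ?_
        intro w hw
        obtain ⟨g, ys, hmem, hvw⟩ := hDom w hw
        exact ⟨g, ys, hmem, hvw⟩
      · -- y is a dominating element
        obtain ⟨d₁, d₂, rfl⟩ := List.append_of_mem hyD
        have hp' : (pre ++ Term.app xh xargs :: post).Perm (M ++ (d₁ ++ Term.app xh xargs :: d₂)) := by
          have : (pre ++ y :: post).Perm ((M ++ d₁) ++ y :: d₂) := by
            simpa [List.append_assoc] using hp
          simpa [List.append_assoc] using perm_replace (x := Term.app xh xargs) this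
        refine Val.mul hp' (by simp) hq hPW ?_
        intro w hw
        obtain ⟨g, ys, hmem, hvw⟩ := hDom w hw
        rcases hmem with hmem | hmem
        · by_cases hty : Term.app (Sum.inl g) ys = y
          · -- the dominator is the rewritten element
            have hvw' : Val lt w (markTop y) := by rw [← hty]; exact hvw
            have := h2 w hvw'
            rcases xh with x0 | x0
            · exact ⟨x0, xargs, Or.inl (by simp), by simpa using this⟩
            · exact ⟨x0, xargs, Or.inr (by simp), by simpa using this⟩
          · exact ⟨g, ys, Or.inl (mem_of_replace hmem hty), hvw⟩
        · by_cases hty : Term.app (Sum.inr g) ys = y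
          · have hvw' : Val lt w (markTop y) := by rw [← hty]; exact hvw
            have := h2 w hvw'
            rcases xh with x0 | x0
            · exact ⟨x0, xargs, Or.inl (by simp), by simpa using this⟩
            · exact ⟨x0, xargs, Or.inr (by simp), by simpa using this⟩
          · exact ⟨g, ys, Or.inr (mem_of_replace hmem hty), hvw⟩

end StarGames

namespace StarGames

variable {σ X : Type} {lt : σ → σ → Prop}

theorem forall₂_mem_left {α β} {R : α → β → Prop} :
    ∀ {V : List α} {M : List β}, List.Forall₂ R V M → ∀ v ∈ V, ∃ m ∈ M, R v m := by
  intro V M h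
  induction h with
  | nil => intro v hv; cases hv
  | cons hab _ ih =>
    intro v hv
    rcases List.mem_cons.1 hv with rfl | hv
    · exact ⟨_, List.mem_cons_self, hab⟩
    · obtain ⟨m, hm, hr⟩ := ih v hv
      exact ⟨m, List.mem_cons_of_mem _ hm, hr⟩

/-- swap two adjacent arguments on the right of `Val`. -/
theorem val_swap_root : ∀ (n : ℕ) (u : Term σ X) (h : σ ⊕ σ)
    (l : List (Term (σ ⊕ σ) X)) (x y : Term (σ ⊕ σ) X) (r : List (Term (σ ⊕ σ) X)),
    mu (Term.app h (l ++ x :: y :: r)) + sizeOf u ≤ n →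
    Val lt u (Term.app h (l ++ x :: y :: r)) →
    Val lt u (Term.app h (l ++ y :: x :: r)) := by
  intro n
  induction n using Nat.strong_induction_on with
  | _ n IH =>
  intro u h l x y r hn hval
  have hsw : (l ++ y :: x :: r).Perm (l ++ x :: y :: r) :=
    List.Perm.append_left l (List.Perm.swap x y r)
  rcases h with f | f
  · rcases val_inl_iff.1 hval with ⟨us, ts', hu, hp, hPW⟩ | hw
    · subst hu
      exact Val.eq' (hsw.trans hp) hPW
    · refine Val.wk (IH (n-1) ?_ u (Sum.inr f) l x y r ?_ hw) <;>
      · simp only [mu, mub, Term.app.sizeOf_spec, Sum.inl.sizeOf_spec, Sum.inr.sizeOf_spec] at *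
        omega
  · rcases val_inr_iff.1 hval with ⟨t', ht, hv⟩ | ⟨g, us, hu, hlt, hall⟩ |
      ⟨us, M, D, V, W, hu, hp, hD, hq, hPW, hDom⟩
    · exact Val.sub (hsw.mem_iff.2 ht) hv
    · subst hu
      refine Val.drop hlt fun v hvmem => ?_
      have hs : sizeOf v < sizeOf (Term.app g us) := by
        have := List.sizeOf_lt_of_mem hvmem
        simp only [Term.app.sizeOf_spec]; omega
      exact IH (n-1) (by omega) v (Sum.inr f) l x y r (by omega) (hall v hvmem)
    · subst hu
      exact Val.mul (hsw.trans hp) hD hq hPW hDom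

/-- the `copy` rule is sound for values. -/
theorem val_copy (htrans : Transitive lt) {f g : σ} (hgf : lt g f) {k : ℕ}
    {ts : List (Term (σ ⊕ σ) X)} :
    ∀ (n : ℕ) (u : Term σ X), sizeOf u ≤ n →
    Val lt u (Term.app (Sum.inr g)
      (List.replicate k (Term.app (Sum.inr f) ts))) →
    Val lt u (Term.app (Sum.inr f) ts) := by
  intro n
  induction n using Nat.strong_induction_on with
  | _ n IH =>
  intro u hn hval
  rcases val_inr_iff.1 hval with ⟨t', ht, hv⟩ | ⟨g', us, hu, hlt, hall⟩ |
    ⟨us, M, D, V, W, hu, hp, hD, hq, hPW, hDom⟩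
  · rwa [List.eq_of_mem_replicate ht] at hv
  · subst hu
    refine Val.drop (htrans hlt hgf) fun v hvmem => ?_
    have hs : sizeOf v < sizeOf (Term.app g' us) := by
      have := List.sizeOf_lt_of_mem hvmem
      simp only [Term.app.sizeOf_spec]; omega
    exact IH (n-1) (by omega) v (by omega) (hall v hvmem)
  · subst hu
    refine Val.drop hgf fun v hvmem => ?_
    have hv' : v ∈ V ++ W := hq.mem_iff.1 hvmem
    rcases List.mem_append.1 hv' with hv' | hv'
    · obtain ⟨m, hm, hr⟩ := forall₂_mem_left hPW v hv'
      have : m ∈ List.replicate k (Term.app (Sum.inr f) ts) :=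
        hp.mem_iff.2 (List.mem_append_left _ hm)
      rwa [List.eq_of_mem_replicate this] at hr
    · obtain ⟨g'', ys, hmem, hvw⟩ := hDom v hv'
      rcases hmem with hmem | hmem
      · have : Term.app (Sum.inl g'') ys ∈ List.replicate k (Term.app (Sum.inr f) ts) :=
          hp.mem_iff.2 (List.mem_append_right _ hmem)
        have := List.eq_of_mem_replicate this
        cases this
      · have hmem' : Term.app (Sum.inr g'') ys ∈ List.replicate k (Term.app (Sum.inr f) ts) :=
          hp.mem_iff.2 (List.mem_append_right _ hmem)
        have heq := List.eq_of_mem_replicate hmem'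
        injection heq with h1 h2
        injection h1 with h1
        subst h1; subst h2
        exact hvw

end StarGames

namespace StarGames

variable {σ X : Type} {lt : σ → σ → Prop}

theorem forall₂_perm_right {α β} {R : α → β → Prop} :
    ∀ {M M' : List β}, M.Perm M' → ∀ {V : List α}, List.Forall₂ R V M →
      ∃ V', V.Perm V' ∧ List.Forall₂ R V' M' := by
  intro M M' hp
  induction hp with
  | nil =>
    intro V h
    cases h
    exact ⟨[], List.Perm.refl _, List.Forall₂.nil⟩
  | cons a p ih =>
    intro V h
    rcases List.forall₂_cons_right_iff.1 h with ⟨v, V₁, hv, h₁, rfl⟩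
    obtain ⟨V₁', hperm, hf⟩ := ih h₁
    exact ⟨v :: V₁', hperm.cons v, List.Forall₂.cons hv hf⟩
  | swap a b l =>
    intro V h
    rcases List.forall₂_cons_right_iff.1 h with ⟨v, V₁, hv, h₁, rfl⟩
    rcases List.forall₂_cons_right_iff.1 h₁ with ⟨w, V₂, hw, h₂, rfl⟩
    exact ⟨w :: v :: V₂, List.Perm.swap w v V₂, List.Forall₂.cons hw (List.Forall₂.cons hv h₂)⟩
  | trans p q ih₁ ih₂ =>
    intro V h
    obtain ⟨V₁, hp₁, hf₁⟩ := ih₁ h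
    obtain ⟨V₂, hp₂, hf₂⟩ := ih₂ hf₁
    exact ⟨V₂, hp₁.trans hp₂, hf₂⟩

theorem forall₂_append_split {α β} {R : α → β → Prop} :
    ∀ {l₁ l₂ : List β} {V : List α}, List.Forall₂ R V (l₁ ++ l₂) →
      ∃ V₁ V₂, V = V₁ ++ V₂ ∧ List.Forall₂ R V₁ l₁ ∧ List.Forall₂ R V₂ l₂ := by
  intro l₁
  induction l₁ with
  | nil => exact fun h => ⟨[], _, rfl, List.Forall₂.nil, h⟩
  | cons b l₁ ih =>
    intro l₂ V h
    rcases List.forall₂_cons_right_iff.1 h with ⟨v, V', hv, h', rfl⟩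
    obtain ⟨V₁, V₂, rfl, hf₁, hf₂⟩ := ih h'
    exact ⟨v :: V₁, V₂, rfl, List.Forall₂.cons hv hf₁, hf₂⟩

theorem forall₂_mem_right_all {α β} {R : α → β → Prop} {E : β} :
    ∀ {M : List β}, (∀ m ∈ M, m = E) → ∀ {V : List α}, List.Forall₂ R V M →
      ∀ v ∈ V, R v E := by
  intro M hM V h
  induction h with
  | nil => intro v hv; cases hv
  | cons hab hrest ih =>
    intro v hv
    rcases List.mem_cons.1 hv with rfl | hv
    · have := hM _ (List.mem_cons_self)
      rwa [this] at hab
    · exact ih (fun m hm => hM m (List.mem_cons_of_mem _ hm)) v hv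

/-- the `down` rule is sound for values. -/
theorem val_down {f g : σ} {k : ℕ} {xs ys zs : List (Term (σ ⊕ σ) X)} :
    ∀ (n : ℕ) (u : Term σ X), sizeOf u ≤ n →
    Val lt u (Term.app (Sum.inr f)
      (xs ++ List.replicate k (Term.app (Sum.inr g) ys) ++ zs)) →
    Val lt u (Term.app (Sum.inr f) (xs ++ Term.app (Sum.inl g) ys :: zs)) := by
  classical
  set E : Term (σ ⊕ σ) X := Term.app (Sum.inr g) ys with hE
  set B : Term (σ ⊕ σ) X := Term.app (Sum.inl g) ys with hB
  intro n
  induction n using Nat.strong_induction_on with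
  | _ n IH =>
  intro u hn hval
  rcases val_inr_iff.1 hval with ⟨t', ht, hv⟩ | ⟨g', us, hu, hlt, hall⟩ |
    ⟨us, M, D, V, W, hu, hp, hD, hq, hPW, hDom⟩
  · -- sub
    rcases List.mem_append.1 ht with ht | ht
    · rcases List.mem_append.1 ht with ht | ht
      · exact Val.sub (List.mem_append_left _ ht) hv
      · have := List.eq_of_mem_replicate ht
        subst this
        exact Val.sub (by simp [hB]) (Val.wk hv)
    · exact Val.sub (List.mem_append_right _ (List.mem_cons_of_mem _ ht)) hv
  · -- drop
    subst hu
    refine Val.drop hlt fun v hvmem => ?_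
    have hs : sizeOf v < sizeOf (Term.app g' us) := by
      have := List.sizeOf_lt_of_mem hvmem
      simp only [Term.app.sizeOf_spec]; omega
    exact IH (n-1) (by omega) v (by omega) (hall v hvmem)
  · -- mul
    subst hu
    set p : Term (σ ⊕ σ) X → Bool := fun a => decide (a = E) with hpdef
    have hpE : ∀ a, p a = true ↔ a = E := by intro a; simp [hpdef]
    -- filtered perms
    have hMsplit : M.Perm (M.filter p ++ M.filter (fun a => !p a)) :=
      (List.filter_append_perm p M).symm
    have hDsplit : D.Perm (D.filter p ++ D.filter (fun a => !p a)) :=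
      (List.filter_append_perm p D).symm
    -- the not-E parts
    have hreplnil : (List.replicate k E).filter (fun a => !p a) = [] := by
      apply List.filter_eq_nil_iff.2
      intro a ha
      have := List.eq_of_mem_replicate ha
      subst this
      simp [hpdef]
    have hfilt : ((xs.filter (fun a => !p a) ++ zs.filter (fun a => !p a))).Perm
        (M.filter (fun a => !p a) ++ D.filter (fun a => !p a)) := by
      have h := hp.filter (fun a => !p a)
      simp only [List.filter_append, hreplnil, List.append_nil] at h
      exact h
    -- main permutation for the target argument list
    have hms : ((xs.filter (fun a => !p a) : List (Term (σ ⊕ σ) X)) : Multiset (Term (σ ⊕ σ) X)) +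
        ((zs.filter (fun a => !p a) : List (Term (σ ⊕ σ) X)) : Multiset (Term (σ ⊕ σ) X)) =
        ((M.filter (fun a => !p a) : List (Term (σ ⊕ σ) X)) : Multiset (Term (σ ⊕ σ) X)) +
         ((D.filter (fun a => !p a) : List (Term (σ ⊕ σ) X)) : Multiset (Term (σ ⊕ σ) X)) := by
      have h := hfilt
      rw [← Multiset.coe_eq_coe, ← Multiset.coe_add, ← Multiset.coe_add] at h
      exact h
    have hxs : ((xs : List (Term (σ ⊕ σ) X)) : Multiset (Term (σ ⊕ σ) X)) =
        ((xs.filter p : List (Term (σ ⊕ σ) X)) : Multiset (Term (σ ⊕ σ) X)) +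
        ((xs.filter (fun a => !p a) : List (Term (σ ⊕ σ) X)) : Multiset (Term (σ ⊕ σ) X)) := by
      rw [Multiset.coe_add, Multiset.coe_eq_coe]
      exact (List.filter_append_perm p xs).symm
    have hzs : ((zs : List (Term (σ ⊕ σ) X)) : Multiset (Term (σ ⊕ σ) X)) =
        ((zs.filter p : List (Term (σ ⊕ σ) X)) : Multiset (Term (σ ⊕ σ) X)) +
        ((zs.filter (fun a => !p a) : List (Term (σ ⊕ σ) X)) : Multiset (Term (σ ⊕ σ) X)) := by
      rw [Multiset.coe_add, Multiset.coe_eq_coe]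
      exact (List.filter_append_perm p zs).symm
    have hmain : (xs ++ B :: zs).Perm
        ((M.filter (fun a => !p a)) ++
          ((D.filter (fun a => !p a)) ++ (xs.filter p ++ zs.filter p) ++ [B])) := by
      apply Multiset.coe_eq_coe.1
      simp only [← Multiset.coe_add, ← Multiset.cons_coe]
      rw [hxs, hzs, ← Multiset.singleton_add]
      have h2 : ∀ (MN DN XP ZP XN ZN SB : Multiset (Term (σ ⊕ σ) X)),
          MN + DN = XN + ZN →
          (XP + XN) + (SB + (ZP + ZN)) = MN + (DN + (XP + ZP) + SB) := by
        intro MN DN XP ZP XN ZN SB hkey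
        rw [show MN + (DN + (XP + ZP) + SB) = (MN + DN) + (XP + ZP + SB) by abel, hkey]
        abel
      exact h2 _ _ _ _ _ _ _ hms.symm
    -- decompose the matched part
    obtain ⟨V', hVperm, hf⟩ := forall₂_perm_right hMsplit hPW
    obtain ⟨VE, Vr, rfl, hfE, hfr⟩ := forall₂_append_split hf
    have hMpE : ∀ m ∈ M.filter p, m = E := by
      intro m hm
      have := List.of_mem_filter hm
      exact (hpE m).1 this
    have hq2 : us.Perm (Vr ++ (VE ++ W)) := by
      have hcomm : ((VE ++ Vr) ++ W).Perm (Vr ++ (VE ++ W)) := by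
        have h1 : (VE ++ Vr).Perm (Vr ++ VE) := List.perm_append_comm
        have h2 := h1.append_right W
        rw [List.append_assoc Vr VE W] at h2
        exact h2
      exact (hq.trans (hVperm.append_right W)).trans hcomm
    have hdom2 : ∀ w ∈ VE ++ W, ∃ g' ys',
        (Term.app (Sum.inl g') ys' ∈
            (D.filter (fun a => !p a) ++ (xs.filter p ++ zs.filter p) ++ [B]) ∨
         Term.app (Sum.inr g') ys' ∈
            (D.filter (fun a => !p a) ++ (xs.filter p ++ zs.filter p) ++ [B])) ∧
        Val lt w (Term.app (Sum.inr g') ys') := by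
      intro w hw
      rcases List.mem_append.1 hw with hw | hw
      · have hvE : Val lt w E := forall₂_mem_right_all hMpE hfE w hw
        exact ⟨g, ys, Or.inl (by rw [← hB]; simp), hvE⟩
      · obtain ⟨g', ys', hmem, hv⟩ := hDom w hw
        rcases hmem with hmem | hmem
        · have hne : Term.app (Sum.inl g') ys' ≠ E := by
            rw [hE]; intro hcon; cases hcon
          have hmf : Term.app (Sum.inl g') ys' ∈ D.filter (fun a => !p a) :=
            List.mem_filter.2 ⟨hmem, by simp [hpdef, hne]⟩
          exact ⟨g', ys', Or.inl (by simp [hmf]), hv⟩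
        · by_cases heq : Term.app (Sum.inr g') ys' = E
          · have hg : g' = g ∧ ys' = ys := by
              rw [hE] at heq
              injection heq with h1 h2
              injection h1 with h1
              exact ⟨h1, h2⟩
            obtain ⟨h1', h2'⟩ := hg
            refine ⟨g', ys', Or.inl ?_, hv⟩
            rw [h1', h2', ← hB]
            simp
          · have hmf : Term.app (Sum.inr g') ys' ∈ D.filter (fun a => !p a) :=
              List.mem_filter.2 ⟨hmem, by simp [hpdef, heq]⟩
            exact ⟨g', ys', Or.inr (by simp [hmf]), hv⟩
    exact Val.mul hmain (by simp) hq2 hfr hdom2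

end StarGames

namespace StarGames

variable {σ X : Type} {lt : σ → σ → Prop}

/-- if `u` is strictly below `y`, and `y ∈ ts`, then `u` is strictly below `f⋆(ts)`. -/
theorem val_markTop_sub {u : Term σ X} {y : Term (σ ⊕ σ) X} {f : σ}
    {ts : List (Term (σ ⊕ σ) X)} (hy : y ∈ ts) (h : Val lt u (markTop y)) :
    Val lt u (Term.app (Sum.inr f) ts) := by
  cases y with
  | var x =>
    rw [markTop_var, val_var_iff] at h
    subst h
    exact Val.sub hy (Val.var' x)
  | app hd ys =>
    cases hd with
    | inl c =>
      rw [markTop_inl] at h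
      exact Val.sub hy (Val.wk h)
    | inr c =>
      rw [markTop_inr] at h
      exact Val.sub hy h

/-- generic transport of values along context closure. -/
theorem rewrite_val_transport {R : Term (σ ⊕ σ) X → Term (σ ⊕ σ) X → Prop}
    (hroot : ∀ {a b}, R a b → (∃ h args, a = Term.app h args) ∧
      ((∀ u, Val lt u b → Val lt u a) ∧
       (∀ u, Val lt u (markTop b) → Val lt u (markTop a)))) :
    ∀ {a b}, Rewrite R a b → (∃ h args, a = Term.app h args) ∧
      ((∀ u, Val lt u b → Val lt u a) ∧
       (∀ u, Val lt u (markTop b) → Val lt u (markTop a))) := by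
  intro a b hr
  induction hr with
  | root h => exact hroot h
  | @congr s t f pre post _ IH =>
    refine ⟨⟨f, pre ++ s :: post, rfl⟩, fun u hv => ?_, fun u hv => ?_⟩
    · exact val_congr IH.1 IH.2.1 IH.2.2 (mu (Term.app f (pre ++ t :: post)) + sizeOf u)
        u f pre post le_rfl hv
    · cases f with
      | inl c =>
        rw [markTop_inl] at hv ⊢
        exact val_congr IH.1 IH.2.1 IH.2.2 _ u (Sum.inr c) pre post le_rfl hv
      | inr c =>
        rw [markTop_inr] at hv ⊢
        exact val_congr IH.1 IH.2.1 IH.2.2 _ u (Sum.inr c) pre post le_rfl hv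

/-- transport along swap steps. -/
theorem val_swap_transport {a b : Term (σ ⊕ σ) X} (h : Rewrite SwapRoot a b) :
    (∀ u, Val lt u b → Val lt u a) ∧
    (∀ u, Val lt u (markTop b) → Val lt u (markTop a)) :=
  (rewrite_val_transport (fun {a b} hr => by
    cases hr with
    | swap f us x y ws =>
      refine ⟨⟨f, us ++ x :: y :: ws, rfl⟩, fun u hv => ?_, fun u hv => ?_⟩
      · exact val_swap_root _ u f us y x ws le_rfl hv
      · cases f with
        | inl c =>
          rw [markTop_inl] at hv ⊢
          exact val_swap_root _ u (Sum.inr c) us y x ws le_rfl hv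
        | inr c =>
          rw [markTop_inr] at hv ⊢
          exact val_swap_root _ u (Sum.inr c) us y x ws le_rfl hv) h).2

/-- transport along Star steps (the main preservation lemma). -/
theorem val_star_transport (htrans : Transitive lt) {a b : Term (σ ⊕ σ) X}
    (h : Rewrite (StarRoot lt) a b) :
    (∀ u, Val lt u b → Val lt u a) ∧
    (∀ u, Val lt u (markTop b) → Val lt u (markTop a)) :=
  (rewrite_val_transport (fun {a b} hr => by
    cases hr with
    | put f ts =>
      exact ⟨⟨_, _, rfl⟩, fun u hv => Val.wk hv, fun u hv => by
        rw [markTop_inr] at hv; rw [markTop_inl]; exact hv⟩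
    | @select f xs y zs =>
      refine ⟨⟨_, _, rfl⟩, fun u hv => Val.sub (by simp) hv, fun u hv => ?_⟩
      rw [markTop_inr]
      exact val_markTop_sub (by simp) hv
    | @copy f g k ts hgf =>
      refine ⟨⟨_, _, rfl⟩, fun u hv => ?_, fun u hv => ?_⟩
      · rcases val_inl_iff.1 hv with ⟨us, ts', hu, hp, hPW⟩ | hw
        · subst hu
          have hall : ∀ m ∈ ts', m = Term.app (Sum.inr f) ts := fun m hm =>
            List.eq_of_mem_replicate (hp.mem_iff.2 hm)
          exact Val.drop hgf fun v hvmem =>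
            forall₂_mem_right_all hall hPW v hvmem
        · exact val_copy htrans hgf _ u le_rfl hw
      · rw [markTop_inl] at hv
        rw [markTop_inr]
        exact val_copy htrans hgf _ u le_rfl hv
    | @down f g k xs ys zs =>
      refine ⟨⟨_, _, rfl⟩, fun u hv => ?_, fun u hv => ?_⟩
      · rcases val_inl_iff.1 hv with ⟨us, ts', hu, hp, hPW⟩ | hw
        · subst hu
          obtain ⟨us', hus', hf⟩ := forall₂_perm_right hp.symm hPW
          obtain ⟨AB, C, rfl, hAB, hC⟩ := forall₂_append_split hf
          obtain ⟨A, BE, rfl, hA, hBE⟩ := forall₂_append_split hAB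
          have hmain : (xs ++ Term.app (Sum.inl g) ys :: zs).Perm
              ((xs ++ zs) ++ [Term.app (Sum.inl g) ys]) := by
            refine List.perm_middle.trans ?_
            exact (List.perm_append_singleton _ _).symm
          have hq2 : us.Perm ((A ++ C) ++ BE) := by
            refine hus'.trans ?_
            have h1 : ((A ++ BE) ++ C).Perm (A ++ (BE ++ C)) := by
              rw [List.append_assoc]
            have h2 : (BE ++ C).Perm (C ++ BE) := List.perm_append_comm
            have h3 := h2.append_left A
            refine (h1.trans h3).trans ?_
            rw [List.append_assoc]
          have hdom : ∀ w ∈ BE, ∃ g' ys',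
              (Term.app (Sum.inl g') ys' ∈ [Term.app (Sum.inl g) ys] ∨
               Term.app (Sum.inr g') ys' ∈ [Term.app (Sum.inl g) ys]) ∧
              Val lt w (Term.app (Sum.inr g') ys') := by
            intro w hw
            have hall : ∀ m ∈ List.replicate k (Term.app (Sum.inr g) ys),
                m = Term.app (Sum.inr g) ys := fun m hm => List.eq_of_mem_replicate hm
            exact ⟨g, ys, Or.inl (by simp), forall₂_mem_right_all hall hBE w hw⟩
          exact Val.mul hmain (by simp) hq2 (forall₂_append_build hA hC) hdom
        · exact val_down _ u le_rfl hw
      · rw [markTop_inl] at hv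
        rw [markTop_inr]
        exact val_down _ u le_rfl hv) h).2

end StarGames

namespace StarGames

open Ordinal Order StarOrd

variable {σ X : Type} {lt : σ → σ → Prop}

/-- the underlying symbol. -/
def sym : σ ⊕ σ → σ := Sum.elim id id

@[simp] theorem sym_inl (f : σ) : sym (Sum.inl f : σ ⊕ σ) = f := rfl
@[simp] theorem sym_inr (f : σ) : sym (Sum.inr f : σ ⊕ σ) = f := rfl

/-- inclusion of plain terms into marked terms. -/
def inject : Term σ X → Term (σ ⊕ σ) X := Term.relabel Sum.inl

theorem relabel_app {σ' : Type} (h : σ → σ') (f : σ) (ts : List (Term σ X)) :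
    Term.relabel h (Term.app f ts) = Term.app (h f) (ts.map (Term.relabel h)) := by
  rw [Term.relabel]
  congr 1
  simp

theorem inject_app (f : σ) (us : List (Term σ X)) :
    inject (Term.app f us) = Term.app (Sum.inl f : σ ⊕ σ) (us.map inject) :=
  relabel_app Sum.inl f us

theorem inject_var (x : X) : inject (Term.var x : Term σ X) = Term.var x := by
  rw [inject, Term.relabel]

variable (hwf : WellFounded lt)

/-- ordinal interpretation of (marked) terms; blind to marks. -/
noncomputable def Theta : Term (σ ⊕ σ) X → Ordinal.{0}
  | .var _ => 0
  | .app h ts => phi hwf (sym h)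
      (lsum (ts.attach.map fun ⟨t, _⟩ => ω ^ Theta t) + 1)
decreasing_by
  have := List.sizeOf_lt_of_mem ‹_ ∈ ts›
  simp only [Term.app.sizeOf_spec]
  omega

theorem theta_app (h : σ ⊕ σ) (ts : List (Term (σ ⊕ σ) X)) :
    Theta hwf (Term.app h ts) =
      phi hwf (sym h) (lsum (ts.map fun t => ω ^ Theta hwf t) + 1) := by
  rw [Theta]
  congr 2
  simp

theorem theta_var (x : X) : Theta hwf (Term.var x : Term (σ ⊕ σ) X) = 0 := by
  rw [Theta]

theorem theta_mark (f : σ) (ts : List (Term (σ ⊕ σ) X)) :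
    Theta hwf (Term.app (Sum.inl f) ts) = Theta hwf (Term.app (Sum.inr f) ts) := by
  rw [theta_app, theta_app, sym_inl, sym_inr]

theorem theta_arg_lt {t₀ : Term (σ ⊕ σ) X} {ts : List (Term (σ ⊕ σ) X)}
    (h : t₀ ∈ ts) (hd : σ ⊕ σ) : Theta hwf t₀ < Theta hwf (Term.app hd ts) := by
  rw [theta_app]
  have h1 : Theta hwf t₀ ≤ ω ^ Theta hwf t₀ := right_le_opow _ one_lt_omega0
  have h2 : ω ^ Theta hwf t₀ ≤ lsum (ts.map fun t => ω ^ Theta hwf t) :=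
    le_lsum (List.mem_map_of_mem h)
  have h3 : lsum (ts.map fun t => ω ^ Theta hwf t) <
      lsum (ts.map fun t => ω ^ Theta hwf t) + 1 := lt_add_one _
  exact lt_of_le_of_lt (h1.trans h2) (lt_of_lt_of_le h3 (phi_le_self hwf _ _))

/-- mapping a `Forall₂`. -/
theorem forall₂_map {α β γ δ : Type*} {R : α → β → Prop} {S : γ → δ → Prop}
    {f : α → γ} {g : β → δ} (h : ∀ {a b}, R a b → S (f a) (g b)) :
    ∀ {l₁ l₂}, List.Forall₂ R l₁ l₂ → List.Forall₂ S (l₁.map f) (l₂.map g) := by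
  intro l₁ l₂ hl
  induction hl with
  | nil => exact List.Forall₂.nil
  | cons hab _ ih => exact List.Forall₂.cons (h hab) ih

theorem list_exists_max : ∀ {l : List Ordinal}, l ≠ [] → ∃ m ∈ l, ∀ y ∈ l, y ≤ m := by
  intro l
  induction l with
  | nil => intro h; exact absurd rfl h
  | cons a l ih =>
    intro _
    rcases eq_or_ne l [] with rfl | hne
    · exact ⟨a, by simp, by simp⟩
    · obtain ⟨m, hm, hmax⟩ := ih hne
      rcases le_total a m with h | h
      · exact ⟨m, List.mem_cons_of_mem _ hm, by
          intro y hy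
          rcases List.mem_cons.1 hy with rfl | hy
          · exact h
          · exact hmax y hy⟩
      · exact ⟨a, List.mem_cons_self, by
          intro y hy
          rcases List.mem_cons.1 hy with rfl | hy
          · exact le_rfl
          · exact (hmax y hy).trans h⟩

theorem lsum_dom {l₁ l₂ : List Ordinal} (hne : l₂ ≠ [])
    (hpow : ∀ y ∈ l₂, ∃ c : Ordinal, y = ω ^ c)
    (hdom : ∀ x ∈ l₁, ∃ y ∈ l₂, x < y) : lsum l₁ < lsum l₂ := by
  obtain ⟨m, hm, hmax⟩ := list_exists_max hne
  obtain ⟨c, rfl⟩ := hpow m hm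
  have h1 : lsum l₁ < ω ^ c := by
    apply lsum_lt_opow
    intro x hx
    obtain ⟨y, hy, hxy⟩ := hdom x hx
    exact lt_of_lt_of_le hxy (hmax y hy)
  exact lt_of_lt_of_le h1 (le_lsum hm)

end StarGames

namespace StarGames

open Ordinal Order StarOrd

variable {σ X : Type} {lt : σ → σ → Prop}

theorem not_starfree_inr {f : σ} {ts : List (Term (σ ⊕ σ) X)} :
    ¬ StarFreeTerm (Term.app (Sum.inr f) ts) := by
  intro h
  cases h with
  | app _ _ hp _ =>
    obtain ⟨f', hf'⟩ := hp
    cases hf'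

theorem forall₂_map_mem {α β γ δ : Type*} {R : α → β → Prop} {S : γ → δ → Prop}
    {f : α → γ} {g : β → δ} :
    ∀ {l₁ : List α} {l₂ : List β}, List.Forall₂ R l₁ l₂ →
      (∀ a b, a ∈ l₁ → b ∈ l₂ → R a b → S (f a) (g b)) →
      List.Forall₂ S (l₁.map f) (l₂.map g) := by
  intro l₁ l₂ hl
  induction hl with
  | nil => exact fun _ => List.Forall₂.nil
  | cons hab _ ih =>
    intro h
    exact List.Forall₂.cons
      (h _ _ (List.mem_cons_self) (List.mem_cons_self) hab)
      (ih fun a b ha hb => h a b (List.mem_cons_of_mem _ ha) (List.mem_cons_of_mem _ hb))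

theorem mu_inr_mem_lt {g' : σ} {ys' ts : List (Term (σ ⊕ σ) X)} {f : σ}
    (h : Term.app (Sum.inl g') ys' ∈ ts ∨ Term.app (Sum.inr g') ys' ∈ ts) :
    mu (Term.app (Sum.inr g') ys' : Term (σ ⊕ σ) X) < mu (Term.app (Sum.inr f) ts) := by
  rcases h with h | h
  · have h1 := List.sizeOf_lt_of_mem h
    have h2 := mub_le_one (Term.app (Sum.inr g') ys' : Term (σ ⊕ σ) X)
    simp only [mu, mub, Term.app.sizeOf_spec, Sum.inl.sizeOf_spec, Sum.inr.sizeOf_spec] at *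
    omega
  · exact mu_mem_lt h _

theorem add_one_lt_add_one {a b : Ordinal} (h : a < b) : a + 1 < b + 1 := by
  rw [Ordinal.add_one_eq_succ, Ordinal.add_one_eq_succ]
  exact Order.succ_lt_succ h

variable (hwf : WellFounded lt)

/-- the ordinal interpretation bounds values, strictly if the dominating term is marked. -/
theorem val_theta : ∀ (n : ℕ) (u : Term σ X) (t : Term (σ ⊕ σ) X),
    mu t + sizeOf u ≤ n → Val lt u t →
    Theta hwf (inject u) ≤ Theta hwf t ∧
      (¬ StarFreeTerm t → Theta hwf (inject u) < Theta hwf t) := by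
  intro n
  induction n using Nat.strong_induction_on with
  | _ n IH =>
  intro u t hn hval
  cases t with
  | var x =>
    have := val_var_iff.1 hval
    subst this
    rw [inject_var]
    exact ⟨le_rfl, fun hns => absurd (Uses.var x) hns⟩
  | app hd ts =>
  cases hd with
  | inl f =>
    rcases val_inl_iff.1 hval with ⟨us, ts', hu, hp, hPW⟩ | hw
    · -- eq clause
      subst hu
      have hsize : ∀ v ∈ us, sizeOf v < sizeOf (Term.app f us) := by
        intro v hv
        have := List.sizeOf_lt_of_mem hv
        simp only [Term.app.sizeOf_spec]; omega
      have hmu : ∀ s ∈ ts', mu s < mu (Term.app (Sum.inl f) ts : Term (σ ⊕ σ) X) := by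
        intro s hs
        exact mu_mem_lt (hp.mem_iff.2 hs) _
      have hIHp : ∀ v s, v ∈ us → s ∈ ts' → Val lt v s →
          Theta hwf (inject v) ≤ Theta hwf s ∧
            (¬ StarFreeTerm s → Theta hwf (inject v) < Theta hwf s) := by
        intro v s hv hs hval'
        exact IH (mu s + sizeOf v)
          (by have := hmu s hs; have := hsize v hv; omega) v s le_rfl hval'
      have hle2 : List.Forall₂ (· ≤ ·)
          (us.map fun v => ω ^ Theta hwf (inject v))
          (ts'.map fun s => ω ^ Theta hwf s) := by
        refine forall₂_map_mem hPW ?_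
        intro v s hv hs hr
        exact opow_le_opow_right omega0_pos (hIHp v s hv hs hr).1
      have hperm : lsum (ts'.map fun s => ω ^ Theta hwf s) =
          lsum (ts.map fun s => ω ^ Theta hwf s) :=
        lsum_perm ((hp.map _).symm)
      have hle : Theta hwf (inject (Term.app f us)) ≤
          Theta hwf (Term.app (Sum.inl f) ts) := by
        rw [inject_app, theta_app, theta_app, sym_inl, List.map_map]
        apply (phi_strictMono hwf f).monotone
        apply add_le_add_left
        rw [← hperm]
        exact lsum_le_of_forall₂ hle2
      refine ⟨hle, fun hns => ?_⟩
      -- strict part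
      have hex : ∃ t₀ ∈ ts, ¬ StarFreeTerm t₀ := by
        by_contra hall
        push_neg at hall
        exact hns (Uses.app _ _ ⟨f, rfl⟩ hall)
      obtain ⟨t₀, ht₀, hns₀⟩ := hex
      have ht₀' : t₀ ∈ ts' := hp.mem_iff.1 ht₀
      obtain ⟨l₁, l₂, rfl⟩ := List.append_of_mem ht₀'
      obtain ⟨a₁, v₀, a₂, rfl, ha₁, hv₀, ha₂⟩ := forall₂_split hPW
      have hstrict : ω ^ Theta hwf (inject v₀) < ω ^ Theta hwf t₀ := by
        apply (opow_lt_opow_iff_right one_lt_omega0).2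
        exact (hIHp v₀ t₀ (by simp) ht₀' hv₀).2 hns₀
      have htail : List.Forall₂ (· ≤ ·)
          ((a₁ ++ a₂).map fun v => ω ^ Theta hwf (inject v))
          ((l₁ ++ l₂).map fun s => ω ^ Theta hwf s) := by
        rw [List.map_append, List.map_append]
        refine forall₂_append_build ?_ ?_
        · refine forall₂_map_mem ha₁ ?_
          intro v s hv hs hr
          exact opow_le_opow_right omega0_pos
            ((hIHp v s (by simp [hv]) (by simp [hs]) hr).1)
        · refine forall₂_map_mem ha₂ ?_
          intro v s hv hs hr
          exact opow_le_opow_right omega0_pos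
            ((hIHp v s (by simp [hv]) (by simp [hs]) hr).1)
      have hlt2 : lsum ((a₁ ++ v₀ :: a₂).map fun v => ω ^ Theta hwf (inject v)) <
          lsum ((l₁ ++ t₀ :: l₂).map fun s => ω ^ Theta hwf s) := by
        rw [lsum_perm ((List.perm_middle).map _),
            lsum_perm ((List.perm_middle (a := t₀)).map _)]
        rw [List.map_cons, List.map_cons]
        exact lsum_lt_of_forall₂ hstrict htail
      rw [inject_app, theta_app, theta_app, sym_inl, List.map_map]
      apply phi_strictMono hwf f
      apply add_one_lt_add_one
      rw [← hperm]
      exact hlt2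
    · -- wk clause
      have hres := IH (n - 1) (by
          have : mu (Term.app (Sum.inr f) ts : Term (σ ⊕ σ) X) <
              mu (Term.app (Sum.inl f) ts : Term (σ ⊕ σ) X) := by
            simp only [mu, mub, Term.app.sizeOf_spec, Sum.inl.sizeOf_spec,
              Sum.inr.sizeOf_spec]
            omega
          omega) u (Term.app (Sum.inr f) ts) (by
          have : mu (Term.app (Sum.inr f) ts : Term (σ ⊕ σ) X) <
              mu (Term.app (Sum.inl f) ts : Term (σ ⊕ σ) X) := by
            simp only [mu, mub, Term.app.sizeOf_spec, Sum.inl.sizeOf_spec,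
              Sum.inr.sizeOf_spec]
            omega
          omega) hw
      have hlt := hres.2 not_starfree_inr
      rw [theta_mark]
      exact ⟨hlt.le, fun _ => hlt⟩
  | inr f =>
    suffices h : Theta hwf (inject u) < Theta hwf (Term.app (Sum.inr f) ts) by
      exact ⟨h.le, fun _ => h⟩
    rcases val_inr_iff.1 hval with ⟨t₀, ht₀, hv⟩ | ⟨g, us, hu, hlt, hall⟩ |
      ⟨us, M, D, V, W, hu, hp, hD, hq, hPW, hDom⟩
    · -- sub
      have hres := IH (n - 1) (by have := mu_mem_lt ht₀ (Sum.inr f : σ ⊕ σ); omega)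
        u t₀ (by have := mu_mem_lt ht₀ (Sum.inr f : σ ⊕ σ); omega) hv
      exact lt_of_le_of_lt hres.1 (theta_arg_lt hwf ht₀ _)
    · -- drop
      subst hu
      have hsize : ∀ v ∈ us, sizeOf v < sizeOf (Term.app g us) := by
        intro v hv
        have := List.sizeOf_lt_of_mem hv
        simp only [Term.app.sizeOf_spec]; omega
      have hIHv : ∀ v ∈ us, Theta hwf (inject v) <
          Theta hwf (Term.app (Sum.inr f) ts) := by
        intro v hv
        exact (IH (mu (Term.app (Sum.inr f) ts : Term (σ ⊕ σ) X) + sizeOf v)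
          (by have := hsize v hv; omega) v _ le_rfl (hall v hv)).2 not_starfree_inr
      rw [inject_app, theta_app, theta_app, sym_inl, sym_inr, List.map_map]
      set x := lsum (ts.map fun s => ω ^ Theta hwf s) + 1 with hx
      have hT : ω ^ phi hwf f x = phi hwf f x := phi_omega_opow_fp hwf f x
      have h1 : lsum (us.map fun v => ω ^ Theta hwf (inject v)) < phi hwf f x := by
        rw [← hT]
        apply lsum_lt_opow
        intro a ha
        obtain ⟨v, hv, rfl⟩ := List.mem_map.1 ha
        rw [hT]
        apply opow_lt_phi
        have := hIHv v hv
        rwa [theta_app, sym_inr] at this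
      have h2 := succ_lt_phi hwf h1
      exact phi_lt_phi_of_prec hwf hlt h2
    · -- mul
      subst hu
      have husmem : ∀ v ∈ us, sizeOf v < sizeOf (Term.app f us) := by
        intro v hv
        have := List.sizeOf_lt_of_mem hv
        simp only [Term.app.sizeOf_spec]; omega
      -- matched part
      have hle2 : List.Forall₂ (· ≤ ·)
          (V.map fun v => ω ^ Theta hwf (inject v))
          (M.map fun s => ω ^ Theta hwf s) := by
        refine forall₂_map_mem hPW ?_
        intro v s hv hs hr
        have hvus : v ∈ us := hq.mem_iff.2 (List.mem_append_left _ hv)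
        have hsts : s ∈ ts := hp.mem_iff.2 (List.mem_append_left _ hs)
        apply opow_le_opow_right omega0_pos
        exact (IH (mu s + sizeOf v)
          (by have := mu_mem_lt hsts (Sum.inr f : σ ⊕ σ); have := husmem v hvus; omega)
          v s le_rfl hr).1
      -- dominated part
      have hdom2 : ∀ x ∈ (W.map fun v => ω ^ Theta hwf (inject v)),
          ∃ y ∈ (D.map fun s => ω ^ Theta hwf s), x < y := by
        intro x hx
        obtain ⟨w, hw, rfl⟩ := List.mem_map.1 hx
        obtain ⟨g', ys', hmem, hv⟩ := hDom w hw
        have hwus : w ∈ us := hq.mem_iff.2 (List.mem_append_right _ hw)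
        have hmu' : mu (Term.app (Sum.inr g') ys' : Term (σ ⊕ σ) X) <
            mu (Term.app (Sum.inr f) ts) := by
          apply mu_inr_mem_lt
          rcases hmem with h | h
          · exact Or.inl (hp.mem_iff.2 (List.mem_append_right _ h))
          · exact Or.inr (hp.mem_iff.2 (List.mem_append_right _ h))
        have hlt' : Theta hwf (inject w) < Theta hwf (Term.app (Sum.inr g') ys') :=
          (IH (mu (Term.app (Sum.inr g') ys' : Term (σ ⊕ σ) X) + sizeOf w)
            (by have := husmem w hwus; omega) w _ le_rfl hv).2 not_starfree_inr
        rcases hmem with h | h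
        · refine ⟨ω ^ Theta hwf (Term.app (Sum.inl g') ys'), List.mem_map_of_mem h, ?_⟩
          rw [theta_mark]
          exact (opow_lt_opow_iff_right one_lt_omega0).2 hlt'
        · exact ⟨ω ^ Theta hwf (Term.app (Sum.inr g') ys'), List.mem_map_of_mem h,
            (opow_lt_opow_iff_right one_lt_omega0).2 hlt'⟩
      have hDlt : lsum (W.map fun v => ω ^ Theta hwf (inject v)) <
          lsum (D.map fun s => ω ^ Theta hwf s) := by
        apply lsum_dom
        · intro hnil
          exact hD (List.map_eq_nil_iff.1 hnil)
        · intro y hy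
          obtain ⟨s, _, rfl⟩ := List.mem_map.1 hy
          exact ⟨Theta hwf s, rfl⟩
        · exact hdom2
      have hkey : lsum (us.map fun v => ω ^ Theta hwf (inject v)) <
          lsum (ts.map fun s => ω ^ Theta hwf s) := by
        rw [lsum_perm (hq.map _), lsum_perm (hp.map _), List.map_append,
          List.map_append, lsum_append, lsum_append]
        calc lsum (V.map fun v => ω ^ Theta hwf (inject v)) ♯
              lsum (W.map fun v => ω ^ Theta hwf (inject v))
            ≤ lsum (M.map fun s => ω ^ Theta hwf s) ♯
              lsum (W.map fun v => ω ^ Theta hwf (inject v)) :=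
              Ordinal.nadd_le_nadd_right (lsum_le_of_forall₂ hle2) _
          _ < lsum (M.map fun s => ω ^ Theta hwf s) ♯
              lsum (D.map fun s => ω ^ Theta hwf s) :=
              Ordinal.nadd_lt_nadd_left hDlt _
      rw [inject_app, theta_app, theta_app, sym_inl, sym_inr, List.map_map]
      apply phi_strictMono hwf f
      exact add_one_lt_add_one hkey

end StarGames

namespace StarGames

open Ordinal Order StarOrd

variable {σ X : Type} {lt : σ → σ → Prop}

theorem list_skolem {α β : Type} {P : α → β → Prop} :
    ∀ {ts : List β}, (∀ t ∈ ts, ∃ u, P u t) → ∃ us, List.Forall₂ P us ts := by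
  intro ts
  induction ts with
  | nil => exact fun _ => ⟨[], List.Forall₂.nil⟩
  | cons t ts ih =>
    intro h
    obtain ⟨u, hu⟩ := h t (List.mem_cons_self)
    obtain ⟨us, hus⟩ := ih fun t' ht' => h t' (List.mem_cons_of_mem _ ht')
    exact ⟨u :: us, List.Forall₂.cons hu hus⟩

theorem map_eq_of_forall₂ {α β γ : Type*} {F : α → γ} {G : β → γ} :
    ∀ {l₁ : List α} {l₂ : List β},
      List.Forall₂ (fun u t => F u = G t) l₁ l₂ → l₁.map F = l₂.map G := by
  intro l₁ l₂ h
  induction h with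
  | nil => rfl
  | cons hab _ ih => simp [hab, ih]

variable (hwf : WellFounded lt)

/-- every star-free term is its own value, with equal interpretation. -/
theorem starfree_val {s : Term (σ ⊕ σ) X} (hsf : StarFreeTerm s) :
    ∃ u : Term σ X, Val lt u s ∧ Theta hwf (inject u) = Theta hwf s := by
  induction hsf with
  | var x => exact ⟨Term.var x, Val.var' x, by rw [inject_var]⟩
  | app h ts hp hall IH =>
    obtain ⟨f, rfl⟩ := hp
    obtain ⟨us, hus⟩ := list_skolem IH
    refine ⟨Term.app f us, Val.eq' (List.Perm.refl ts)
      (hus.imp fun {a b} h => h.1), ?_⟩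
    rw [inject_app, theta_app, theta_app, sym_inl, List.map_map]
    have hmap : us.map ((fun t => ω ^ Theta hwf t) ∘ inject) =
        ts.map (fun t => ω ^ Theta hwf t) :=
      map_eq_of_forall₂ (hus.imp fun {a b} h => by
        simp only [Function.comp_apply]
        rw [h.2])
    rw [hmap]

theorem uses_app_iff {p : σ ⊕ σ → Prop} {f : σ ⊕ σ} {ts : List (Term (σ ⊕ σ) X)} :
    Uses p (Term.app f ts) ↔ p f ∧ ∀ t ∈ ts, Uses p t := by
  constructor
  · intro h
    cases h with
    | app _ _ h1 h2 => exact ⟨h1, h2⟩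
  · intro ⟨h1, h2⟩
    exact Uses.app _ _ h1 h2

theorem uses_swap {p : σ ⊕ σ → Prop} {a b : Term (σ ⊕ σ) X}
    (h : Rewrite SwapRoot a b) : Uses p a ↔ Uses p b := by
  induction h with
  | root hr =>
    cases hr with
    | swap f us x y ws =>
      have hperm : (us ++ x :: y :: ws).Perm (us ++ y :: x :: ws) :=
        List.Perm.append_left us (List.Perm.swap y x ws)
      rw [uses_app_iff, uses_app_iff]
      constructor
      · rintro ⟨h1, h2⟩
        exact ⟨h1, fun t ht => h2 t (hperm.mem_iff.2 ht)⟩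
      · rintro ⟨h1, h2⟩
        exact ⟨h1, fun t ht => h2 t (hperm.mem_iff.1 ht)⟩
  | @congr s t f pre post _ IH =>
    rw [uses_app_iff, uses_app_iff]
    constructor
    · intro ⟨h1, h2⟩
      refine ⟨h1, fun t' ht' => ?_⟩
      rcases List.mem_append.1 ht' with h | h
      · exact h2 t' (List.mem_append_left _ h)
      · rcases List.mem_cons.1 h with rfl | h
        · exact IH.1 (h2 s (by simp))
        · exact h2 t' (by simp [h])
    · intro ⟨h1, h2⟩
      refine ⟨h1, fun t' ht' => ?_⟩
      rcases List.mem_append.1 ht' with h | h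
      · exact h2 t' (List.mem_append_left _ h)
      · rcases List.mem_cons.1 h with rfl | h
        · exact IH.2 (h2 t (by simp))
        · exact h2 t' (by simp [h])

theorem uses_equiv {p : σ ⊕ σ → Prop} {a b : Term (σ ⊕ σ) X}
    (h : TermEquiv a b) : Uses p a ↔ Uses p b := by
  induction h with
  | rel _ _ hr => exact uses_swap hr
  | refl _ => exact Iff.rfl
  | symm _ _ _ ih => exact ih.symm
  | trans _ _ _ _ _ ih1 ih2 => exact ih1.trans ih2

theorem swapstep_symm {a b : Term (σ ⊕ σ) X} (h : Rewrite SwapRoot a b) :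
    Rewrite SwapRoot b a := by
  induction h with
  | root hr =>
    cases hr with
    | swap f us x y ws => exact Rewrite.root (SwapRoot.swap f us y x ws)
  | congr f pre post _ IH => exact Rewrite.congr f pre post IH

theorem val_equiv {w t : Term (σ ⊕ σ) X} (h : TermEquiv w t) {u : Term σ X} :
    Val lt u w ↔ Val lt u t := by
  induction h with
  | rel _ _ hr =>
    exact ⟨fun hv => (val_swap_transport (swapstep_symm hr)).1 u hv,
      fun hv => (val_swap_transport hr).1 u hv⟩
  | refl _ => exact Iff.rfl
  | symm _ _ _ ih => exact ih.symm
  | trans _ _ _ _ _ ih1 ih2 => exact ih1.trans ih2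

/-- the first step out of a star-free term marks it, keeping `Theta`. -/
theorem first_step {a b : Term (σ ⊕ σ) X} (hsf : StarFreeTerm a)
    (h : Rewrite (StarRoot lt) a b) :
    ¬ StarFreeTerm b ∧ Theta hwf b = Theta hwf a := by
  induction h with
  | root hr =>
    cases hr with
    | put f ts => exact ⟨not_starfree_inr, (theta_mark hwf f ts).symm⟩
    | select f xs y zs => exact absurd hsf not_starfree_inr
    | copy f g k ts hgf => exact absurd hsf not_starfree_inr
    | down f g k xs ys zs => exact absurd hsf not_starfree_inr
  | @congr s t f pre post _ IH =>
    have hc := (uses_app_iff.1 hsf)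
    have hs : StarFreeTerm s := hc.2 s (by simp)
    obtain ⟨hnb, hθ⟩ := IH hs
    constructor
    · intro hb
      exact hnb ((uses_app_iff.1 hb).2 t (by simp))
    · rw [theta_app, theta_app]
      congr 3
      rw [List.map_append, List.map_append, List.map_cons, List.map_cons, hθ]

/-- tree-level value predicate. -/
def ValT (lt : σ → σ → Prop) (u : Term σ X) (T : Tree (σ ⊕ σ) X) : Prop :=
  ∃ w, T = Tree.mk w ∧ Val lt u w

theorem valT_step {A B : Tree (σ ⊕ σ) X} (htrans : Transitive lt)
    (h : StarTree lt A B) {u : Term σ X} (hv : ValT lt u B) : ValT lt u A := by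
  obtain ⟨s, t, hA, hB, hrw⟩ := h
  obtain ⟨w, hw, hvw⟩ := hv
  have hequiv : TermEquiv w t := Quotient.exact (hw.symm.trans hB)
  have hvt : Val lt u t := (val_equiv hequiv).1 hvw
  exact ⟨s, hA, (val_star_transport htrans hrw).1 u hvt⟩

theorem valT_rtg {A B : Tree (σ ⊕ σ) X} (htrans : Transitive lt)
    (h : Relation.ReflTransGen (StarTree lt) A B) {u : Term σ X}
    (hv : ValT lt u B) : ValT lt u A := by
  induction h with
  | refl => exact hv
  | tail _ hstep ih => exact ih (valT_step htrans hstep hv)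

end StarGames


namespace StarGames

/-- **Acyclicity on trees.**
Let `(Σ, <)` be a well-founded partial order.  For no star-free tree `t` over
`Σ` do we have `t ▷⁺ t`. -/
theorem tree_acyclicity
    {σ X : Type} [Countable X] [Infinite X]
    (lt : σ → σ → Prop) (hirr : Irreflexive lt) (htrans : Transitive lt)
    (hwf : WellFounded lt) :
    ¬ ∃ T : Tree (σ ⊕ σ) X, StarFreeTree T ∧ Relation.TransGen (StarTree lt) T T := by
  rintro ⟨T, ⟨s₀, hT, hsf₀⟩, htg⟩
  obtain ⟨T₁, hstep, hrest⟩ := Relation.TransGen.head'_iff.1 htg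
  obtain ⟨s', t₁, hT', hT₁, hrw⟩ := hstep
  have hequiv : TermEquiv s' s₀ := Quotient.exact (hT'.symm.trans hT)
  have hsf' : StarFreeTerm s' := (uses_equiv hequiv).2 hsf₀
  obtain ⟨hnb, hθ⟩ := first_step hwf hsf' hrw
  obtain ⟨u₀, hval₀, hθ₀⟩ := starfree_val hwf hsf'
  have hvT : ValT lt u₀ T := ⟨s', hT', hval₀⟩
  have hvT₁ : ValT lt u₀ T₁ := valT_rtg htrans hrest hvT
  obtain ⟨w, hw, hvw⟩ := hvT₁
  have hequiv₁ : TermEquiv w t₁ := Quotient.exact (hw.symm.trans hT₁)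
  have hvt₁ : Val lt u₀ t₁ := (val_equiv hequiv₁).1 hvw
  have hstrict := (val_theta hwf (mu t₁ + sizeOf u₀) u₀ t₁ le_rfl hvt₁).2 hnb
  rw [hθ, hθ₀] at hstrict
  exact lt_irrefl _ hstrict

end StarGames
end
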